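/- arXiv:1312.6465 — 4 statements merged into one kernel-verified Lean document; each statement's English description precedes it below -/
import Mathlib

section
/- Let p : Γ̃ → Γ be a universal cover of a finite connected simple graph Γ, with a fixed linear order on V(Γ̃). Let T′ be a finite induced subgraph of Γ̃ and let T be an induced subgraph of T′. Then for every w ∈ G(Γ) one has supp(φ(Γ,T)(w)) ⊆ supp(φ(Γ,T′)(w)); in particular, ker φ(Γ,T′) ⊆ ker φ(Γ,T). -/
/-! Right-angled Artin groups in the "opposite" convention:
generators are vertices, and two generators commute iff the vertices are NOT adjacent. -/

/-- The commutation relators for the right-angled Artin group (opposite convention):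
one commutator for each pair of distinct non-adjacent vertices. -/
def raagRels {V : Type*} (Γ : SimpleGraph V) : Set (FreeGroup V) :=
  {r | ∃ u v : V, u ≠ v ∧ ¬ Γ.Adj u v ∧
    r = FreeGroup.of u * FreeGroup.of v * (FreeGroup.of u)⁻¹ * (FreeGroup.of v)⁻¹}

/-- The right-angled Artin group `G(Γ)` (opposite convention). -/
abbrev Raag {V : Type*} (Γ : SimpleGraph V) : Type _ := PresentedGroup (raagRels Γ)

/-- The vertex generators of `G(Γ)`. -/
abbrev Raag.of {V : Type*} (Γ : SimpleGraph V) (v : V) : Raag Γ := PresentedGroup.of v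

/-- The element of `G(Γ)` represented by a word: a list of letters, where the letter `(v, b)`
stands for `v` if `b = true` and for `v⁻¹` if `b = false`. -/
def wordProd {V : Type*} (Γ : SimpleGraph V) (w : List (V × Bool)) : Raag Γ :=
  (w.map fun l => if l.2 then Raag.of Γ l.1 else (Raag.of Γ l.1)⁻¹).prod

/-- A word is reduced if no shorter word represents the same element of `G(Γ)`. -/
def IsReducedWord {V : Type*} (Γ : SimpleGraph V) (w : List (V × Bool)) : Prop :=
  ∀ w' : List (V × Bool), wordProd Γ w' = wordProd Γ w → w.length ≤ w'.length

/-- The word length of `g` with respect to a generating set `S` of a group: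
the least length of a list of elements of `S ∪ S⁻¹` whose product is `g`. -/
noncomputable def wordLength {G : Type*} [Group G] (S : Set G) (g : G) : ℕ :=
  sInf {n | ∃ l : List G, (∀ x ∈ l, x ∈ S ∨ x⁻¹ ∈ S) ∧ l.prod = g ∧ l.length = n}

/-- The (right-invariant) word metric associated to a generating set. -/
noncomputable def wordDist {G : Type*} [Group G] (S : Set G) (x y : G) : ℝ :=
  (wordLength S (y * x⁻¹) : ℝ)

/-- Word length in `G(Γ)` with respect to the vertex generating set. -/
noncomputable def raagNorm {V : Type*} (Γ : SimpleGraph V) (g : Raag Γ) : ℕ :=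
  wordLength (Set.range (Raag.of Γ)) g

/-- The word metric on `G(Γ)` with respect to the vertex generating set. -/
noncomputable def raagDist {V : Type*} (Γ : SimpleGraph V) (x y : Raag Γ) : ℝ :=
  wordDist (Set.range (Raag.of Γ)) x y

/-- A quasi-isometric group embedding: an injective group homomorphism which
is a quasi-isometric embedding with respect to the given metrics. -/
def IsQIEmbedding {G H : Type*} [Group G] [Group H] (f : G →* H)
    (dG : G → G → ℝ) (dH : H → H → ℝ) : Prop :=
  Function.Injective f ∧ ∃ C : ℝ, 1 ≤ C ∧ ∀ x y : G,
    dG x y / C - C ≤ dH (f x) (f y) ∧ dH (f x) (f y) ≤ C * dG x y + C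

/-- The support of `g ∈ G(Γ)`: vertices occurring in some reduced word representing `g`. -/
def raagSupp {V : Type*} (Γ : SimpleGraph V) (g : Raag Γ) : Set V :=
  {v | ∃ w : List (V × Bool), IsReducedWord Γ w ∧ wordProd Γ w = g ∧ ∃ b, (v, b) ∈ w}

/-- A cancellation of the vertex `v` in the word `w`: a subword `v^{±1} w' v^{∓1}` where the
support of the element represented by `w'` is disjoint from the link of `v`. -/
def HasCancellationOf {V : Type*} (Γ : SimpleGraph V) (w : List (V × Bool)) (v : V) : Prop :=
  ∃ (w₁ w' w₂ : List (V × Bool)) (b : Bool),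
    w = w₁ ++ (v, b) :: (w' ++ (v, !b) :: w₂) ∧
    ∀ u ∈ raagSupp Γ (wordProd Γ w'), ¬ Γ.Adj v u

/-- An innermost cancellation of the vertex `v` in the word `w`: a cancellation
`v^{±1} w' v^{∓1}` in which moreover no letter of `w'` involves `v`. -/
def HasInnermostCancellationOf {V : Type*} (Γ : SimpleGraph V) (w : List (V × Bool)) (v : V) :
    Prop :=
  ∃ (w₁ w' w₂ : List (V × Bool)) (b : Bool),
    w = w₁ ++ (v, b) :: (w' ++ (v, !b) :: w₂) ∧
    (∀ u ∈ raagSupp Γ (wordProd Γ w'), ¬ Γ.Adj v u) ∧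
    ∀ b' : Bool, (v, b') ∉ w'

/-- A covering of simple graphs: a graph homomorphism which is bijective on neighbor sets. -/
structure IsGraphCovering {V' V : Type*} (Γ' : SimpleGraph V') (Γ : SimpleGraph V)
    (p : V' → V) : Prop where
  adj : ∀ {x y : V'}, Γ'.Adj x y → Γ.Adj (p x) (p y)
  bijOn : ∀ x : V', Set.BijOn p (Γ'.neighborSet x) (Γ.neighborSet (p x))

/-- A universal cover of a connected graph `Γ`: a covering whose total graph is a tree. -/
def IsUniversalCover {V' V : Type*} (Γ' : SimpleGraph V') (Γ : SimpleGraph V)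
    (p : V' → V) : Prop :=
  IsGraphCovering Γ' Γ p ∧ Γ'.IsTree

section Phi

variable {V' V : Type*} [LinearOrder V'] [DecidableEq V]

/-- The lifts in `T` of a vertex `v`, listed in increasing order. -/
def liftVerts (p : V' → V) (T : Finset V') (v : V) : List V' :=
  (T.filter fun t => p t = v).sort (· ≤ ·)

/-- The lifts in `T` of a vertex `v`, in increasing order, as vertices of the induced subgraph. -/
def liftSubVerts (p : V' → V) (T : Finset V') (v : V) : List (↥(T : Set V')) :=
  (liftVerts p T v).pmap (fun t ht => (⟨t, ht⟩ : ↥(T : Set V')))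
    (fun t ht => by
      have : t ∈ T := (Finset.mem_filter.mp ((Finset.mem_sort _).mp ht)).1
      exact Finset.mem_coe.mpr this)

/-- `φ(Γ,T)` sends each vertex `v` of `Γ` to the product, in increasing order,
of the lifts of `v` lying in `T`.  This predicate singles out the homomorphism `φ(Γ,T)`. -/
def IsPhi (Γ : SimpleGraph V) (Γ' : SimpleGraph V') (p : V' → V) (T : Finset V')
    (φ : Raag Γ →* Raag (Γ'.induce (T : Set V'))) : Prop :=
  ∀ v : V, φ (Raag.of Γ v) =
    ((liftSubVerts p T v).map (Raag.of (Γ'.induce (T : Set V')))).prod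

/-- The `φ(Γ,T)`-homomorphic word of a word `w`: each letter `x^{e}` of `w` is replaced by the
word `(t₁ t₂ ⋯ t_k)^{e}` where `t₁ < t₂ < ⋯ < t_k` are the lifts of `x` lying in `T`. -/
def homWord (p : V' → V) (T : Finset V') (w : List (V × Bool)) :
    List (↥(T : Set V') × Bool) :=
  w.flatMap fun l =>
    if l.2 then (liftSubVerts p T l.1).map (fun t => (t, true))
    else ((liftSubVerts p T l.1).reverse).map (fun t => (t, false))

/-- `φ(Γ,T)` is `F`-surviving: for every reduced word `w` in `G(Γ)` and every `v ∈ F`, the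
`φ(Γ,T)`-homomorphic word of `w` has no cancellation of `v`. -/
def IsSurviving (Γ : SimpleGraph V) (Γ' : SimpleGraph V') (p : V' → V) (T : Finset V')
    (F : Set V') : Prop :=
  ∀ w : List (V × Bool), IsReducedWord Γ w →
    ∀ (v : V') (hv : v ∈ (T : Set V')), v ∈ F →
      ¬ HasCancellationOf (Γ'.induce (T : Set V')) (homWord p T w) ⟨v, hv⟩

end Phi

open scoped commutatorElement

/-! ### Auxiliary machinery -/

section Aux

variable {A : Type*} {Δ : SimpleGraph A} {H : Type*} [Group H]

theorem raag_lift_rels (f : A → H)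
    (hf : ∀ u v : A, u ≠ v → ¬ Δ.Adj u v → Commute (f u) (f v)) :
    ∀ r ∈ raagRels Δ, FreeGroup.lift f r = 1 := by
  rintro r ⟨u, v, huv, hadj, rfl⟩
  have : FreeGroup.lift f (FreeGroup.of u * FreeGroup.of v * (FreeGroup.of u)⁻¹ *
      (FreeGroup.of v)⁻¹) = ⁅f u, f v⁆ := by
    simp [commutatorElement_def]
  rw [this, commutatorElement_eq_one_iff_commute]
  exact hf u v huv hadj

theorem raag_commute {u v : A} (huv : u ≠ v) (hadj : ¬ Δ.Adj u v) :
    Commute (Raag.of Δ u) (Raag.of Δ v) := by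
  rw [← commutatorElement_eq_one_iff_commute]
  have h1 : (⁅Raag.of Δ u, Raag.of Δ v⁆ : Raag Δ) =
      PresentedGroup.mk (raagRels Δ) (FreeGroup.of u * FreeGroup.of v * (FreeGroup.of u)⁻¹ *
        (FreeGroup.of v)⁻¹) := by
    simp [commutatorElement_def, Raag.of, PresentedGroup.of, map_mul]
  rw [h1]
  exact (QuotientGroup.eq_one_iff _).mpr
    (Subgroup.subset_normalClosure ⟨u, v, huv, hadj, rfl⟩)

theorem wordProd_nil : wordProd Δ [] = 1 := rfl

theorem wordProd_cons (l : A × Bool) (w : List (A × Bool)) :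
    wordProd Δ (l :: w) = (if l.2 then Raag.of Δ l.1 else (Raag.of Δ l.1)⁻¹) * wordProd Δ w := by
  simp [wordProd]

theorem wordProd_append (w₁ w₂ : List (A × Bool)) :
    wordProd Δ (w₁ ++ w₂) = wordProd Δ w₁ * wordProd Δ w₂ := by
  simp [wordProd]

theorem map_wordProd (F : Raag Δ →* H) (w : List (A × Bool)) :
    F (wordProd Δ w) = (w.map fun l => if l.2 then F (Raag.of Δ l.1)
      else (F (Raag.of Δ l.1))⁻¹).prod := by
  induction w with
  | nil => simp [wordProd_nil]
  | cons l w ih =>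
    rw [wordProd_cons, map_mul, ih, List.map_cons, List.prod_cons]
    congr 1
    split <;> simp

theorem exists_word (g : Raag Δ) : ∃ w : List (A × Bool), wordProd Δ w = g := by
  let S : Subgroup (Raag Δ) :=
    { carrier := {g | ∃ w : List (A × Bool), wordProd Δ w = g}
      one_mem' := ⟨[], rfl⟩
      mul_mem' := by
        rintro a b ⟨wa, rfl⟩ ⟨wb, rfl⟩
        exact ⟨wa ++ wb, wordProd_append wa wb⟩
      inv_mem' := by
        rintro a ⟨w, rfl⟩
        refine ⟨(w.reverse.map fun l => (l.1, !l.2)), ?_⟩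
        induction w with
        | nil => simp [wordProd_nil]
        | cons l w ih =>
          rw [wordProd_cons, List.reverse_cons, List.map_append, wordProd_append, ih]
          simp [wordProd, mul_comm]
          cases h : l.2 <;> simp }
  exact PresentedGroup.generated_by (raagRels Δ) S
    (fun j => ⟨[(j, true)], by simp [wordProd]⟩) g

theorem exists_reduced_word (g : Raag Δ) :
    ∃ w : List (A × Bool), IsReducedWord Δ w ∧ wordProd Δ w = g := by
  obtain ⟨w0, hw0⟩ := exists_word g
  have hs : {n | ∃ w : List (A × Bool), wordProd Δ w = g ∧ w.length = n}.Nonempty :=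
    ⟨w0.length, w0, hw0, rfl⟩
  obtain ⟨w, hw, hlen⟩ := Nat.sInf_mem hs
  refine ⟨w, fun w' hw' => ?_, hw⟩
  rw [hlen]
  exact Nat.sInf_le ⟨w', by rw [hw'] at *; exact ⟨hw, rfl⟩⟩

end Aux

section Kill

variable {A : Type*} [DecidableEq A] {Δ : SimpleGraph A}

/-- The retraction of `Raag Δ` killing the generator `x`. -/
def killHom (Δ : SimpleGraph A) (x : A) : Raag Δ →* Raag Δ :=
  PresentedGroup.toGroup (f := fun y => if y = x then 1 else Raag.of Δ y)
    (raag_lift_rels _ (by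
      intro u v huv hadj
      by_cases hu : u = x <;> by_cases hv : v = x <;> simp [hu, hv]
      exact raag_commute huv hadj))

theorem killHom_of (x y : A) :
    killHom Δ x (Raag.of Δ y) = if y = x then 1 else Raag.of Δ y :=
  PresentedGroup.toGroup.of _

theorem killHom_wordProd (x : A) (w : List (A × Bool)) :
    killHom Δ x (wordProd Δ w) = wordProd Δ (w.filter fun l => l.1 ≠ x) := by
  induction w with
  | nil => simp [wordProd_nil]
  | cons l w ih =>
    rw [wordProd_cons, map_mul, ih]
    by_cases hl : l.1 = x
    · have : (l :: w).filter (fun l => l.1 ≠ x) = w.filter (fun l => l.1 ≠ x) := by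
        simp [List.filter_cons, hl]
      rw [this]
      have : killHom Δ x (if l.2 then Raag.of Δ l.1 else (Raag.of Δ l.1)⁻¹) = 1 := by
        split <;> simp [killHom_of, hl]
      rw [this, one_mul]
    · have h2 : (l :: w).filter (fun l => l.1 ≠ x) = l :: w.filter (fun l => l.1 ≠ x) := by
        simp [List.filter_cons, hl]
      rw [h2, wordProd_cons]
      congr 1
      split <;> simp [killHom_of, hl]

/-- If `g` has an expression avoiding `x`, then every reduced word for `g` avoids `x`. -/
theorem reduced_word_avoids {g : Raag Δ} {x : A} {a w : List (A × Bool)}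
    (ha : wordProd Δ a = g) (hax : ∀ b : Bool, (x, b) ∉ a)
    (hw : IsReducedWord Δ w) (hwg : wordProd Δ w = g) : ∀ b : Bool, (x, b) ∉ w := by
  intro b hb
  have hfix : killHom Δ x g = g := by
    rw [← ha, killHom_wordProd]
    congr 1
    refine List.filter_eq_self.mpr fun l hl => ?_
    rw [decide_eq_true_eq]
    intro hlx
    exact hax l.2 (by rw [← hlx]; exact hl)
  have hshort : wordProd Δ (w.filter fun l => l.1 ≠ x) = g := by
    rw [← killHom_wordProd, hwg, hfix]
  have := hw _ (hshort.trans hwg.symm)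
  have hlt : (w.filter fun l => (l.1 ≠ x : Bool)).length < w.length := by
    refine lt_of_le_of_ne (List.length_filter_le _ _) fun heq => ?_
    have := List.length_filter_eq_length_iff.mp heq (x, b) hb
    simp at this
  omega

end Kill

section Rest

variable {V' V : Type*} [LinearOrder V'] [DecidableEq V]

instance instDecMemCoeFinset (T : Finset V') : DecidablePred (· ∈ (T : Set V')) :=
  fun t => decidable_of_iff (t ∈ T) Finset.mem_coe.symm

theorem map_pmap_subtype {α M : Type*} {P : α → Prop} (f : Subtype P → M) (g : α → M)
    (hfg : ∀ a (h : P a), f ⟨a, h⟩ = g a) :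
    ∀ (L : List α) (hL : ∀ a ∈ L, P a),
      ((L.pmap (fun a h => (⟨a, h⟩ : Subtype P)) hL).map f) = L.map g := by
  intro L
  induction L with
  | nil => intro _; rfl
  | cons a L ih =>
    intro hL
    simp only [List.pmap, List.map_cons]
    rw [ih, hfg]

theorem liftVerts_filter (p : V' → V) {T T' : Finset V'} (hTT' : T ⊆ T') (v : V) :
    (liftVerts p T' v).filter (fun a => a ∈ T) = liftVerts p T v := by
  have hperm : List.Perm ((liftVerts p T' v).filter (fun a => a ∈ T)) (liftVerts p T v) := by
    rw [← Multiset.coe_eq_coe]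
    have h1 : (↑((liftVerts p T' v).filter (fun a => a ∈ T)) : Multiset V')
        = Multiset.filter (fun a => a ∈ T) (↑(liftVerts p T' v) : Multiset V') := by
      simp [Multiset.filter_coe]
    rw [h1]
    show Multiset.filter _ (↑((T'.filter fun t => p t = v).sort (· ≤ ·)) : Multiset V')
      = (↑((T.filter fun t => p t = v).sort (· ≤ ·)) : Multiset V')
    rw [Finset.sort_eq, Finset.sort_eq, ← Finset.filter_val]
    congr 1
    ext a
    simp only [Finset.mem_filter]
    exact ⟨fun ⟨⟨_, hp⟩, hT⟩ => ⟨hT, hp⟩, fun ⟨hT, hp⟩ => ⟨⟨hTT' hT, hp⟩, hT⟩⟩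
  exact List.Perm.eq_of_pairwise'
    ((Finset.pairwise_sort _ (· ≤ ·)).filter _) (Finset.pairwise_sort _ (· ≤ ·)) hperm

theorem prod_map_filter_eq {M : Type*} [Monoid M] (g : V' → M) (q : V' → Bool) :
    ∀ L : List V', (∀ a ∈ L, q a = false → g a = 1) →
      (L.map g).prod = ((L.filter q).map g).prod := by
  intro L
  induction L with
  | nil => intro _; rfl
  | cons a L ih =>
    intro h
    rw [List.map_cons, List.prod_cons, ih (fun a ha => h a (List.mem_cons_of_mem _ ha))]
    cases hq : q a
    · rw [h a List.mem_cons_self hq, one_mul, List.filter_cons_of_neg (by simp [hq])]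
    · rw [List.filter_cons_of_pos (by simp [hq]), List.map_cons, List.prod_cons]

variable (Γ' : SimpleGraph V') (T T' : Finset V')

/-- The retraction `G(Γ'|T') → G(Γ'|T)` killing the vertices outside `T`. -/
def restHom : Raag (Γ'.induce (T' : Set V')) →* Raag (Γ'.induce (T : Set V')) :=
  PresentedGroup.toGroup
    (f := fun t : ↥(T' : Set V') => if h : (t : V') ∈ (T : Set V') then
      Raag.of (Γ'.induce (T : Set V')) ⟨(t : V'), h⟩ else 1)
    (raag_lift_rels _ (by
      intro u v huv hadj
      by_cases hu : (u : V') ∈ (T : Set V') <;> by_cases hv : (v : V') ∈ (T : Set V') <;>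
        simp only [hu, hv, dif_pos, dif_neg, not_false_iff, Commute.one_left, Commute.one_right]
      refine raag_commute (fun e => huv ?_) (fun h => hadj h)
      injection e with h
      exact Subtype.ext h))

theorem restHom_of (t : ↥(T' : Set V')) :
    restHom Γ' T T' (Raag.of (Γ'.induce (T' : Set V')) t)
      = if h : (t : V') ∈ (T : Set V') then
          Raag.of (Γ'.induce (T : Set V')) ⟨(t : V'), h⟩ else 1 := by
  unfold restHom
  apply PresentedGroup.toGroup.of

theorem restHom_wordProd (u : List (↥(T' : Set V') × Bool)) :
    restHom Γ' T T' (wordProd (Γ'.induce (T' : Set V')) u)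
      = wordProd (Γ'.induce (T : Set V')) (u.flatMap fun l =>
          if h : (l.1 : V') ∈ (T : Set V') then
            [((⟨(l.1 : V'), h⟩ : ↥(T : Set V')), l.2)] else []) := by
  induction u with
  | nil => simp [wordProd_nil]
  | cons l u ih =>
    rw [wordProd_cons, map_mul, ih, List.flatMap_cons, wordProd_append]
    congr 1
    by_cases h : (l.1 : V') ∈ (T : Set V')
    · rw [dif_pos h]
      cases hl : l.2 <;>
        simp only [hl, if_true, if_false, Bool.false_eq_true, map_inv, wordProd_cons,
          wordProd_nil, mul_one, restHom_of, dif_pos h]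
    · rw [dif_neg h]
      cases hl : l.2 <;>
        simp only [hl, if_true, if_false, Bool.false_eq_true, map_inv, wordProd_nil,
          restHom_of, dif_neg h, inv_one]

theorem restHom_phi (Γ : SimpleGraph V) (p : V' → V) (hTT' : T ⊆ T')
    (φT : Raag Γ →* Raag (Γ'.induce (T : Set V')))
    (φT' : Raag Γ →* Raag (Γ'.induce (T' : Set V')))
    (hφT : IsPhi Γ Γ' p T φT) (hφT' : IsPhi Γ Γ' p T' φT') :
    ∀ g : Raag Γ, restHom Γ' T T' (φT' g) = φT g := by
  have key : (restHom Γ' T T').comp φT' = φT := by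
    ext v
    show restHom Γ' T T' (φT' (Raag.of Γ v)) = φT (Raag.of Γ v)
    rw [hφT' v, hφT v, map_list_prod, List.map_map]
    set g : V' → Raag (Γ'.induce (T : Set V')) := fun a =>
      if h : a ∈ (T : Set V') then Raag.of (Γ'.induce (T : Set V')) ⟨a, h⟩ else 1 with hg
    have h1 : ((liftSubVerts p T' v).map
        ((restHom Γ' T T') ∘ Raag.of (Γ'.induce (T' : Set V'))))
        = (liftVerts p T' v).map g := by
      unfold liftSubVerts
      exact map_pmap_subtype _ g (fun a h => by
        simp only [Function.comp_apply, restHom_of, hg]) _ _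
    have h2 : ((liftSubVerts p T v).map (Raag.of (Γ'.induce (T : Set V'))))
        = (liftVerts p T v).map g := by
      unfold liftSubVerts
      exact map_pmap_subtype _ g (fun a h => by simp only [hg, dif_pos h]) _ _
    rw [h1, h2, prod_map_filter_eq g (fun a => a ∈ T) (liftVerts p T' v)
        (by
          intro a _ hq
          simp only [hg]
          rw [dif_neg (by simpa using hq)]),
      liftVerts_filter p hTT' v]
  intro g
  rw [← key]
  rfl

end Rest


/-- For a universal cover `p : Γ̃ → Γ` of a finite connected graph with ordered
vertex set, and finite induced subgraphs `T ≤ T′` of `Γ̃`: for every `w ∈ G(Γ)` one has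
`supp(φ(Γ,T)(w)) ⊆ supp(φ(Γ,T′)(w))` (as subsets of `V(Γ̃)`); in particular
`ker φ(Γ,T′) ⊆ ker φ(Γ,T)`. -/
theorem supp_phi_mono_and_ker_le {V V' : Type} [Fintype V] [DecidableEq V] [LinearOrder V']
    (Γ : SimpleGraph V) (hΓ : Γ.Connected)
    (Γ' : SimpleGraph V') (p : V' → V) (hp : IsUniversalCover Γ' Γ p)
    (T T' : Finset V') (hTT' : T ⊆ T')
    (φT : Raag Γ →* Raag (Γ'.induce (T : Set V')))
    (φT' : Raag Γ →* Raag (Γ'.induce (T' : Set V')))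
    (hφT : IsPhi Γ Γ' p T φT) (hφT' : IsPhi Γ Γ' p T' φT') :
    (∀ (w : Raag Γ) (x : V') (hx : x ∈ (T : Set V')),
      (⟨x, hx⟩ : ↥(T : Set V')) ∈ raagSupp (Γ'.induce (T : Set V')) (φT w) →
        ∃ hx' : x ∈ (T' : Set V'),
          (⟨x, hx'⟩ : ↥(T' : Set V')) ∈ raagSupp (Γ'.induce (T' : Set V')) (φT' w)) ∧
    (∀ w : Raag Γ, φT' w = 1 → φT w = 1) := by
  
  have hψ := restHom_phi Γ' T T' Γ p hTT' φT φT' hφT hφT'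
  constructor
  · rintro w x hx ⟨w₀, hw₀red, hw₀prod, b, hb⟩
    have hx' : x ∈ (T' : Set V') := hTT' hx
    refine ⟨hx', ?_⟩
    obtain ⟨u, hured, huprod⟩ := exists_reduced_word (φT' w)
    by_cases hxu : ∃ b' : Bool, ((⟨x, hx'⟩ : ↥(T' : Set V')), b') ∈ u
    · obtain ⟨b', hb'⟩ := hxu
      exact ⟨u, hured, huprod, b', hb'⟩
    · exfalso
      push_neg at hxu
      set u' : List (↥(T : Set V') × Bool) := u.flatMap (fun l =>
        if h : (l.1 : V') ∈ (T : Set V') then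
          [((⟨(l.1 : V'), h⟩ : ↥(T : Set V')), l.2)] else []) with hu'
      have hprod' : wordProd (Γ'.induce (T : Set V')) u' = φT w := by
        rw [hu', ← restHom_wordProd, huprod, hψ]
      have havoid : ∀ b'' : Bool, ((⟨x, hx⟩ : ↥(T : Set V')), b'') ∉ u' := by
        intro b'' hmem
        rw [hu', List.mem_flatMap] at hmem
        obtain ⟨l, hl, hml⟩ := hmem
        by_cases h : (l.1 : V') ∈ (T : Set V')
        · rw [dif_pos h] at hml
          simp only [List.mem_singleton, Prod.mk.injEq] at hml
          have hxl : (l.1 : V') = x := congrArg Subtype.val hml.1.symm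
          refine hxu l.2 ?_
          have hl1 : l.1 = (⟨x, hx'⟩ : ↥(T' : Set V')) := Subtype.ext hxl
          rw [← hl1]
          exact hl
        · rw [dif_neg h] at hml
          exact List.not_mem_nil hml
      exact reduced_word_avoids hprod' havoid hw₀red hw₀prod b hb
  · intro w h1
    rw [← hψ, h1, map_one]
end

section
/- Let p : Γ̃ → Γ be a universal cover of a finite connected simple graph Γ, with a fixed linear order on V(Γ̃). Let T′ be a finite induced subgraph of Γ̃, let T be an induced subgraph of T′, and let F′ ⊆ F ⊆ V(T). If φ(Γ,T) is F-surviving, then φ(Γ,T′) is F′-surviving. -/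
/-! ### Auxiliary machinery -/

namespace SurvivingAux

open List

section Raag

variable {V : Type*} (G : SimpleGraph V)

theorem raag_of_comm {u v : V} (h : ¬ G.Adj u v) :
    Raag.of G u * Raag.of G v = Raag.of G v * Raag.of G u := by
  by_cases huv : u = v
  · subst huv; rfl
  · have hrel : FreeGroup.of u * FreeGroup.of v * (FreeGroup.of u)⁻¹ * (FreeGroup.of v)⁻¹ ∈
        raagRels G := ⟨u, v, huv, h, rfl⟩
    have h1 : PresentedGroup.mk (raagRels G)
        (FreeGroup.of u * FreeGroup.of v * (FreeGroup.of u)⁻¹ * (FreeGroup.of v)⁻¹) = 1 :=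
      (QuotientGroup.eq_one_iff _).mpr (Subgroup.subset_normalClosure hrel)
    simp only [map_mul, map_inv] at h1
    rw [mul_inv_eq_one, mul_inv_eq_iff_eq_mul] at h1
    exact h1

/-- Lift a vertex map satisfying the commutation relations to a homomorphism on the RAAG. -/
noncomputable def raagLift {H : Type*} [Group H] (f : V → H)
    (hf : ∀ u v : V, ¬ G.Adj u v → f u * f v = f v * f u) : Raag G →* H :=
  PresentedGroup.toGroup (f := f) (by
    rintro r ⟨u, v, huv, hadj, rfl⟩
    simp only [map_mul, map_inv, FreeGroup.lift_apply_of]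
    rw [hf u v hadj]
    group)

@[simp] theorem raagLift_of {H : Type*} [Group H] (f : V → H)
    (hf : ∀ u v : V, ¬ G.Adj u v → f u * f v = f v * f u) (x : V) :
    raagLift G f hf (Raag.of G x) = f x :=
  PresentedGroup.toGroup.of _

theorem wordProd_nil : wordProd G ([] : List (V × Bool)) = 1 := rfl

theorem wordProd_cons (l : V × Bool) (w : List (V × Bool)) :
    wordProd G (l :: w) =
      (if l.2 then Raag.of G l.1 else (Raag.of G l.1)⁻¹) * wordProd G w := by
  simp [wordProd]

theorem wordProd_append (w₁ w₂ : List (V × Bool)) :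
    wordProd G (w₁ ++ w₂) = wordProd G w₁ * wordProd G w₂ := by
  simp [wordProd]

theorem exists_word (g : Raag G) : ∃ w : List (V × Bool), wordProd G w = g := by
  obtain ⟨x, rfl⟩ := PresentedGroup.mk_surjective (raagRels G) g
  refine FreeGroup.induction_on x ⟨[], by simp [wordProd]⟩
    (fun y => ⟨[(y, true)], ?_⟩) (fun y _ => ⟨[(y, false)], ?_⟩) ?_
  · simp [wordProd]; rfl
  · simp [wordProd, map_inv]; rfl
  · rintro a b ⟨w₁, h₁⟩ ⟨w₂, h₂⟩
    exact ⟨w₁ ++ w₂, by rw [wordProd_append, h₁, h₂, map_mul]⟩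

theorem exists_reduced_word (g : Raag G) :
    ∃ w : List (V × Bool), IsReducedWord G w ∧ wordProd G w = g := by
  have hne : {n | ∃ w : List (V × Bool), wordProd G w = g ∧ w.length = n}.Nonempty := by
    obtain ⟨w, hw⟩ := exists_word G g
    exact ⟨w.length, w, hw, rfl⟩
  obtain ⟨w, hwp, hwl⟩ := Nat.sInf_mem hne
  refine ⟨w, fun w' hw' => ?_, hwp⟩
  rw [hwl]
  exact Nat.sInf_le ⟨w', hw'.trans hwp, rfl⟩

end Raag

section Proj

variable {V : Type*} (G : SimpleGraph V)

open Classical in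
/-- Restriction of a vertex of `B` to `A` (`none` if it does not lie in `A`). -/
noncomputable def restrV (A : Set V) {B : Set V} (t : ↥B) : Option ↥A :=
  if h : (t : V) ∈ A then some ⟨t, h⟩ else none

/-- Restriction of a letter over `B` to a letter over `A`. -/
noncomputable def restrL (A : Set V) {B : Set V} (l : ↥B × Bool) : Option (↥A × Bool) :=
  (restrV A l.1).map fun t => (t, l.2)

theorem restrV_isSome {A : Set V} {B : Set V} (t : ↥B) :
    (restrV A t).isSome ↔ (t : V) ∈ A := by
  by_cases h : (t : V) ∈ A <;> simp [restrV, h]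

theorem restrV_pos {A : Set V} {B : Set V} (t : ↥B) (h : (t : V) ∈ A) :
    restrV A t = some ⟨t, h⟩ := by simp [restrV, h]

/-- Deleting the letters of a word over `B` that do not lie in `A`. -/
noncomputable def projW (A : Set V) {B : Set V} (w : List (↥B × Bool)) : List (↥A × Bool) :=
  w.filterMap (restrL A)

/-- Re-interpreting a word over `A` as a word over `B ⊇ A`. -/
def embW {A B : Set V} (hAB : A ⊆ B) (w : List (↥A × Bool)) : List (↥B × Bool) :=
  w.map fun l => (⟨l.1, hAB l.1.2⟩, l.2)

open Classical in
/-- The retraction `G(B) → G(A)` killing the generators outside of `A`. -/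
noncomputable def projHom (A B : Set V) : Raag (G.induce B) →* Raag (G.induce A) :=
  raagLift (G.induce B)
    (fun t => if h : (t : V) ∈ A then Raag.of (G.induce A) ⟨t, h⟩ else 1)
    (by
      intro u v hadj
      by_cases hu : (u : V) ∈ A <;> by_cases hv : (v : V) ∈ A <;> simp [hu, hv]
      exact raag_of_comm _ (by simpa using hadj))

/-- The natural map `G(A) → G(B)` for `A ⊆ B`. -/
noncomputable def embHom {A B : Set V} (hAB : A ⊆ B) :
    Raag (G.induce A) →* Raag (G.induce B) :=
  raagLift (G.induce A) (fun t => Raag.of (G.induce B) ⟨t, hAB t.2⟩)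
    (fun u v hadj => raag_of_comm _ (by simpa using hadj))

open Classical in
@[simp] theorem projHom_of (A B : Set V) (t : ↥B) :
    projHom G A B (Raag.of (G.induce B) t) =
      if h : (t : V) ∈ A then Raag.of (G.induce A) ⟨t, h⟩ else 1 :=
  raagLift_of _ _ _ _

@[simp] theorem embHom_of {A B : Set V} (hAB : A ⊆ B) (t : ↥A) :
    embHom G hAB (Raag.of (G.induce A) t) = Raag.of (G.induce B) ⟨t, hAB t.2⟩ :=
  raagLift_of _ _ _ _

theorem wordProd_projW (A : Set V) {B : Set V} (w : List (↥B × Bool)) :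
    wordProd (G.induce A) (projW A w) = projHom G A B (wordProd (G.induce B) w) := by
  induction w with
  | nil => simp [projW, wordProd_nil]
  | cons l w ih =>
    rw [wordProd_cons, map_mul]
    by_cases h : (l.1 : V) ∈ A
    · rw [projW, filterMap_cons, restrL, restrV_pos _ h]
      simp only [Option.map_some]
      rw [wordProd_cons, ← projW, ih]
      congr 1
      by_cases hb : l.2 = true <;> simp [hb, h]
    · rw [projW, filterMap_cons, restrL, restrV, dif_neg h]
      simp only [Option.map_none]
      rw [← projW, ih]
      have h1 : projHom G A B (if l.2 then Raag.of (G.induce B) l.1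
          else (Raag.of (G.induce B) l.1)⁻¹) = 1 := by
        by_cases hb : l.2 = true <;> simp [hb, h]
      rw [h1, one_mul]

theorem wordProd_embW {A B : Set V} (hAB : A ⊆ B) (w : List (↥A × Bool)) :
    wordProd (G.induce B) (embW hAB w) = embHom G hAB (wordProd (G.induce A) w) := by
  induction w with
  | nil => simp [embW, wordProd_nil]
  | cons l w ih =>
    rw [wordProd_cons, map_mul, embW, List.map_cons, wordProd_cons, ← embW.eq_1 (hAB := hAB), ih]
    congr 1
    by_cases hb : l.2 = true <;> simp [hb]

theorem embW_projW {A B : Set V} (hAB : A ⊆ B) (w : List (↥B × Bool))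
    (h : ∀ l ∈ w, (l.1 : V) ∈ A) : embW hAB (projW A w) = w := by
  induction w with
  | nil => rfl
  | cons l w ih =>
    have hl : (l.1 : V) ∈ A := h l mem_cons_self
    rw [projW, filterMap_cons, restrL, restrV_pos _ hl]
    simp only [Option.map_some]
    rw [← projW, embW, List.map_cons, ← embW.eq_1 (hAB := hAB), ih (fun l' hl' => h l' (mem_cons_of_mem _ hl'))]

theorem mem_of_length_filterMap {α β : Type*} {f : α → Option β} :
    ∀ {l : List α}, (l.filterMap f).length = l.length → ∀ a ∈ l, (f a).isSome := by
  intro l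
  induction l with
  | nil => intro _ a ha; cases ha
  | cons a l ih =>
    intro hlen b hb
    rw [filterMap_cons] at hlen
    cases hfa : f a with
    | none =>
      rw [hfa] at hlen
      have := List.length_filterMap_le f l
      simp only [length_cons] at hlen
      omega
    | some c =>
      rw [hfa] at hlen
      simp only [length_cons, Nat.add_right_cancel_iff] at hlen
      rcases mem_cons.mp hb with rfl | hb'
      · simp [hfa]
      · exact ih hlen b hb'

/-- Letters of a reduced word occur among the letters of any word representing
the same element. -/
theorem letters_of_reduced {B : Set V} {w w₀ : List (↥B × Bool)}
    (hred : IsReducedWord (G.induce B) w₀)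
    (hprod : wordProd (G.induce B) w₀ = wordProd (G.induce B) w) :
    ∀ l ∈ w₀, ∃ l' ∈ w, (l.1 : V) = (l'.1 : V) := by
  set A : Set V := {x | ∃ l' ∈ w, (l'.1 : V) = x} with hA
  have hAB : A ⊆ B := by rintro x ⟨l', _, rfl⟩; exact l'.1.2
  have hwA : ∀ l ∈ w, (l.1 : V) ∈ A := fun l hl => ⟨l, hl, rfl⟩
  have hfix : wordProd (G.induce B) (embW hAB (projW A w)) = wordProd (G.induce B) w := by
    rw [embW_projW hAB w hwA]
  have hg₀ : wordProd (G.induce B) (embW hAB (projW A w₀)) = wordProd (G.induce B) w₀ := by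
    rw [wordProd_embW, wordProd_projW, hprod, ← wordProd_projW, ← wordProd_embW, hfix, ← hprod]
  have hlen := hred _ hg₀
  rw [embW, List.length_map] at hlen
  have hlen' : (projW A w₀).length = w₀.length :=
    le_antisymm (List.length_filterMap_le _ _) hlen
  intro l hl
  have hsome := mem_of_length_filterMap hlen' l hl
  have hmem : (l.1 : V) ∈ A := by
    by_contra hc
    rw [restrL, restrV, dif_neg hc] at hsome
    simp at hsome
  obtain ⟨l', hl', he⟩ := hmem
  exact ⟨l', hl', he.symm⟩

/-- Support transfer along the retraction `G(B) → G(A)`. -/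
theorem supp_transfer {A B : Set V} (hAB : A ⊆ B) (g : Raag (G.induce B)) (u : ↥A)
    (hu : u ∈ raagSupp (G.induce A) (projHom G A B g)) :
    ∃ u' : ↥B, (u' : V) = (u : V) ∧ u' ∈ raagSupp (G.induce B) g := by
  obtain ⟨w₀, hred, hprod, b₀, hmem⟩ := hu
  obtain ⟨W, hWred, hWprod⟩ := exists_reduced_word (G.induce B) g
  have hcmp : wordProd (G.induce A) w₀ = wordProd (G.induce A) (projW A W) := by
    rw [wordProd_projW, hWprod, hprod]
  obtain ⟨l', hl', he⟩ := letters_of_reduced G hred hcmp (u, b₀) hmem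
  obtain ⟨l'', hl'', hsome⟩ := List.mem_filterMap.mp hl'
  have hval : (l'.1 : V) = (l''.1 : V) := by
    by_cases h : (l''.1 : V) ∈ A
    · rw [restrL, restrV_pos _ h] at hsome
      simp only [Option.map_some, Option.some.injEq] at hsome
      rw [← hsome]
    · rw [restrL, restrV, dif_neg h] at hsome
      simp at hsome
  refine ⟨l''.1, by rw [← hval, ← he], W, hWred, hWprod, l''.2, ?_⟩
  simpa using hl''

end Proj

end SurvivingAux

namespace SurvivingAux

section PhiAux

open List

variable {V' V : Type*} [LinearOrder V'] [DecidableEq V]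

theorem liftVerts_filter (p : V' → V) {T T' : Finset V'} (hTT' : T ⊆ T') (v : V) :
    liftVerts p T v = (liftVerts p T' v).filter (fun t => decide (t ∈ T)) := by
  have hmul : ((liftVerts p T v : List V') : Multiset V')
      = (((liftVerts p T' v).filter (fun t => decide (t ∈ T)) : List V') : Multiset V') := by
    rw [← Multiset.filter_coe,
      show ((liftVerts p T v : List V') : Multiset V') = (T.filter fun t => p t = v).val from
        Finset.sort_eq _ _,
      show ((liftVerts p T' v : List V') : Multiset V') = (T'.filter fun t => p t = v).val from
        Finset.sort_eq _ _, ← Finset.filter_val]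
    congr 1
    ext t
    simp only [Finset.mem_filter]
    exact ⟨fun h => ⟨⟨hTT' h.1, h.2⟩, h.1⟩, fun h => ⟨h.2, h.1.2⟩⟩
  exact List.Perm.eq_of_pairwise' (Finset.pairwise_sort _ _)
    (List.Pairwise.sublist (List.filter_sublist) (Finset.pairwise_sort _ _)) (Multiset.coe_eq_coe.mp hmul)

theorem pmap_congr_list {α β : Type*} {P : α → Prop} {f : ∀ a, P a → β} {l₁ l₂ : List α}
    (h : l₁ = l₂) (h₁ : ∀ a ∈ l₁, P a) (h₂ : ∀ a ∈ l₂, P a) :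
    l₁.pmap f h₁ = l₂.pmap f h₂ := by
  subst h; rfl

theorem liftSubVerts_filterMap (p : V' → V) {T T' : Finset V'} (hTT' : T ⊆ T') (v : V) :
    (liftSubVerts p T' v).filterMap (restrV (T : Set V')) = liftSubVerts p T v := by
  have key : ∀ (l : List V') (h : ∀ t ∈ l, t ∈ (T' : Set V')),
      (l.pmap (fun t ht => (⟨t, ht⟩ : ↥(T' : Set V'))) h).filterMap (restrV (T : Set V'))
        = (l.filter fun t => decide (t ∈ T)).pmap (fun t ht => (⟨t, ht⟩ : ↥(T : Set V')))
            (fun t ht => by simpa using List.of_mem_filter ht) := by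
    intro l
    induction l with
    | nil => intro h; rfl
    | cons a l ih =>
      intro h
      have ha2 : a ∈ (T' : Set V') := h a mem_cons_self
      by_cases ha : a ∈ (T : Set V')
      · have hr : restrV (T : Set V') (⟨a, ha2⟩ : ↥(T' : Set V')) = some ⟨a, ha⟩ :=
          restrV_pos _ ha
        have hfe : (a :: l).filter (fun t => decide (t ∈ T))
            = a :: l.filter (fun t => decide (t ∈ T)) :=
          List.filter_cons_of_pos (by simpa using ha)
        have hpf : ∀ t ∈ a :: l.filter (fun t => decide (t ∈ T)), t ∈ (T : Set V') := by
          intro t ht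
          rcases List.mem_cons.mp ht with rfl | ht'
          · exact ha
          · simpa using List.of_mem_filter ht'
        rw [pmap_congr_list hfe (fun t ht => by simpa using List.of_mem_filter ht) hpf]
        simp only [List.pmap, List.filterMap_cons, hr]
        exact congrArg _ (ih _)
      · have hr : restrV (T : Set V') (⟨a, ha2⟩ : ↥(T' : Set V')) = none := by
          rw [restrV, dif_neg ha]
        have hfe : (a :: l).filter (fun t => decide (t ∈ T))
            = l.filter (fun t => decide (t ∈ T)) :=
          List.filter_cons_of_neg (by simpa using ha)
        rw [pmap_congr_list hfe (fun t ht => by simpa using List.of_mem_filter ht)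
          (fun t ht => by simpa using List.of_mem_filter ht)]
        simp only [List.pmap, List.filterMap_cons, hr]
        exact ih _
  rw [liftSubVerts, liftSubVerts, key]
  exact pmap_congr_list (liftVerts_filter p hTT' v).symm _ _

theorem homWord_cons (p : V' → V) (T : Finset V') (l : V × Bool) (w : List (V × Bool)) :
    homWord p T (l :: w) =
      (if l.2 then (liftSubVerts p T l.1).map (fun t => (t, true))
        else ((liftSubVerts p T l.1).reverse).map (fun t => (t, false))) ++ homWord p T w := by
  rw [homWord, List.flatMap_cons]
  rfl

theorem projW_homWord (p : V' → V) {T T' : Finset V'} (hTT' : T ⊆ T') (w : List (V × Bool)) :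
    projW (T : Set V') (homWord p T' w) = homWord p T w := by
  have blk : ∀ (x : V) (bb : Bool),
      (List.map (fun t => (t, bb)) (liftSubVerts p T' x)).filterMap (restrL (T : Set V'))
        = List.map (fun t => (t, bb)) (liftSubVerts p T x) := by
    intro x bb
    rw [List.filterMap_map, ← liftSubVerts_filterMap p hTT' x, List.map_filterMap]
    rfl
  induction w with
  | nil => rfl
  | cons l w ih =>
    rw [homWord_cons, homWord_cons, projW, List.filterMap_append]
    have hblock : (if l.2 then (liftSubVerts p T' l.1).map (fun t => (t, true))
        else ((liftSubVerts p T' l.1).reverse).map (fun t => (t, false))).filterMap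
          (restrL (T : Set V'))
        = (if l.2 then (liftSubVerts p T l.1).map (fun t => (t, true))
        else ((liftSubVerts p T l.1).reverse).map (fun t => (t, false))) := by
      by_cases hb : l.2 = true
      · simp only [hb, if_true]
        exact blk l.1 true
      · simp only [Bool.not_eq_true] at hb
        simp only [hb, Bool.false_eq_true, if_false]
        rw [List.map_reverse, List.map_reverse, List.filterMap_reverse]
        exact congrArg _ (blk l.1 false)
    rw [hblock, ← projW, ih]

end PhiAux

end SurvivingAux

open SurvivingAux in
/-- For a universal cover `p : Γ̃ → Γ` of a finite connected graph with ordered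
vertex set, finite induced subgraphs `T ≤ T′` of `Γ̃` and subsets `F′ ⊆ F ⊆ V(T)`:
if `φ(Γ,T)` is `F`-surviving, then `φ(Γ,T′)` is `F′`-surviving. -/
theorem surviving_mono {V V' : Type} [Fintype V] [DecidableEq V] [LinearOrder V']
    (Γ : SimpleGraph V) (hΓ : Γ.Connected)
    (Γ' : SimpleGraph V') (p : V' → V) (hp : IsUniversalCover Γ' Γ p)
    (T T' : Finset V') (hTT' : T ⊆ T')
    (F F' : Set V') (hF'F : F' ⊆ F) (hFT : F ⊆ (T : Set V'))
    (hsurv : IsSurviving Γ Γ' p T F) :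
    IsSurviving Γ Γ' p T' F' := by
  intro w hw v hv hvF'
  have hvF : v ∈ F := hF'F hvF'
  have hvT : v ∈ (T : Set V') := hFT hvF
  have hAB : (T : Set V') ⊆ (T' : Set V') := Finset.coe_subset.mpr hTT'
  rintro ⟨w₁, w', w₂, b, hdec, hsupp⟩
  refine hsurv w hw v hvT hvF
    ⟨projW (T : Set V') w₁, projW (T : Set V') w', projW (T : Set V') w₂, b, ?_, ?_⟩
  · have h1 : restrL (T : Set V') ((⟨v, hv⟩ : ↥(T' : Set V')), b) = some (⟨v, hvT⟩, b) := by
      simp [restrL, restrV, hvT]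
    have h2 : restrL (T : Set V') ((⟨v, hv⟩ : ↥(T' : Set V')), !b) = some (⟨v, hvT⟩, !b) := by
      simp [restrL, restrV, hvT]
    rw [← projW_homWord p hTT' w, hdec]
    simp only [projW, List.filterMap_append, List.filterMap_cons, h1, h2]
  · intro u hu
    rw [wordProd_projW] at hu
    obtain ⟨u', hval, hsupp'⟩ :=
      supp_transfer Γ' hAB (wordProd (Γ'.induce (T' : Set V')) w') u hu
    intro hadj
    refine hsupp u' hsupp' ?_
    have hA : Γ'.Adj v (u : V') := hadj
    rw [← hval] at hA
    exact hA
end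

section
/- Let p : Γ̃ → Γ be a universal cover of a finite connected simple graph Γ, with a fixed linear order on V(Γ̃). Let T be a finite subtree of Γ̃ and F ⊆ V(T) with p(F) = V(Γ). If φ(Γ,T) is F-surviving, then for every w ∈ G(Γ) one has ‖w‖ ≤ ‖φ(Γ,T)(w)‖ ≤ |V(T)|·‖w‖ (word lengths in G(Γ) and G(T) respectively); in particular φ(Γ,T) is an injective homomorphism and a quasi-isometric group embedding. -/
namespace RT

variable {U : Type*}

/-- Letter inverse. -/
def linv (a : U × Bool) : U × Bool := (a.1, !a.2)

@[simp] lemma linv_linv (a : U × Bool) : linv (linv a) = a := by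
  cases a with | mk x b => simp [linv]

@[simp] lemma linv_fst (a : U × Bool) : (linv a).1 = a.1 := rfl

/-- The group element of a letter. -/
def lelt (X : SimpleGraph U) (a : U × Bool) : Raag X :=
  if a.2 then Raag.of X a.1 else (Raag.of X a.1)⁻¹

lemma wordProd_def (X : SimpleGraph U) (w : List (U × Bool)) :
    wordProd X w = (w.map (lelt X)).prod := rfl

@[simp] lemma wordProd_nil (X : SimpleGraph U) : wordProd X [] = 1 := rfl

@[simp] lemma wordProd_cons (X : SimpleGraph U) (a : U × Bool) (w : List (U × Bool)) :
    wordProd X (a :: w) = lelt X a * wordProd X w := by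
  simp [wordProd_def]

@[simp] lemma wordProd_append (X : SimpleGraph U) (w u : List (U × Bool)) :
    wordProd X (w ++ u) = wordProd X w * wordProd X u := by
  simp [wordProd_def]

@[simp] lemma lelt_linv (X : SimpleGraph U) (a : U × Bool) :
    lelt X (linv a) = (lelt X a)⁻¹ := by
  cases a with | mk x b => cases b <;> simp [lelt, linv]

/-- Letters commute iff equal vertices or non-adjacent. -/
def comm (X : SimpleGraph U) (x y : U) : Prop := x = y ∨ ¬ X.Adj x y

lemma comm_symm {X : SimpleGraph U} {x y : U} (h : comm X x y) : comm X y x := by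
  rcases h with h | h
  · exact Or.inl h.symm
  · exact Or.inr fun h' => h h'.symm

lemma comm_self (X : SimpleGraph U) (x : U) : comm X x x := Or.inl rfl

lemma not_adj_of_comm {X : SimpleGraph U} {x y : U} (h : comm X x y) (hne : ¬ X.Adj x x) :
    ¬ X.Adj x y := by
  rcases h with h | h
  · subst h; exact hne
  · exact h

lemma of_commute {X : SimpleGraph U} {x y : U} (h : comm X x y) :
    Commute (Raag.of X x) (Raag.of X y) := by
  rcases h with h | h
  · subst h; exact Commute.refl _
  · by_cases hxy : x = y
    · subst hxy; exact Commute.refl _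
    · have hr : (FreeGroup.of x * FreeGroup.of y * (FreeGroup.of x)⁻¹ * (FreeGroup.of y)⁻¹ :
          FreeGroup U) ∈ raagRels X := ⟨x, y, hxy, h, rfl⟩
      have h1 : PresentedGroup.mk (raagRels X)
          (FreeGroup.of x * FreeGroup.of y * (FreeGroup.of x)⁻¹ * (FreeGroup.of y)⁻¹) = 1 := by
        apply (QuotientGroup.eq_one_iff _).2
        exact Subgroup.subset_normalClosure hr
      have h2 : Raag.of X x * Raag.of X y * (Raag.of X x)⁻¹ * (Raag.of X y)⁻¹ = 1 := by
        simpa [Raag.of, PresentedGroup.of, map_mul, map_inv] using h1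
      have h3 := mul_eq_one_iff_eq_inv.mp h2
      have : Raag.of X x * Raag.of X y = Raag.of X y * Raag.of X x := by
        rw [inv_inv] at h3
        exact mul_inv_eq_iff_eq_mul.mp h3
      exact this

lemma lelt_commute {X : SimpleGraph U} {a b : U × Bool} (h : comm X a.1 b.1) :
    Commute (lelt X a) (lelt X b) := by
  have h1 := of_commute (X := X) h
  cases a with | mk x s => cases b with | mk y t =>
    simp only at h1
    cases s <;> cases t <;> simp only [lelt, if_true, if_false, Bool.false_eq_true, if_neg] <;>
      [exact (h1.inv_left).inv_right; exact h1.inv_left; exact h1.inv_right; exact h1]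

end RT
namespace RT

variable {U : Type*} {X : SimpleGraph U}

lemma wordProd_eq_mk (w : List (U × Bool)) :
    wordProd X w = PresentedGroup.mk (raagRels X) (FreeGroup.mk w) := by
  induction w with
  | nil =>
    have : (FreeGroup.mk ([] : List (U × Bool))) = 1 := FreeGroup.one_eq_mk.symm
    simp [this]
  | cons a w ih =>
    have : FreeGroup.mk (a :: w) = FreeGroup.mk [a] * FreeGroup.mk w := by
      rw [FreeGroup.mul_mk]; rfl
    rw [wordProd_cons, this, map_mul, ← ih]
    congr 1
    cases a with | mk x b =>
      cases b
      · have : (FreeGroup.mk [(x, false)] : FreeGroup U) = (FreeGroup.of x)⁻¹ := by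
          rw [FreeGroup.of, FreeGroup.inv_mk]
          rfl
        simp [lelt, this, Raag.of, PresentedGroup.of, PresentedGroup.mk]
      · simp [lelt, Raag.of, PresentedGroup.of, FreeGroup.of, PresentedGroup.mk]

lemma wordProd_surjective (X : SimpleGraph U) (g : Raag X) :
    ∃ w : List (U × Bool), wordProd X w = g := by
  obtain ⟨f, rfl⟩ := PresentedGroup.mk_surjective (raagRels X) g
  obtain ⟨L, rfl⟩ : ∃ L, FreeGroup.mk L = f := Quot.exists_rep f
  exact ⟨L, wordProd_eq_mk L⟩

/-- Convert a list of generators/inverses to a word. -/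
lemma list_to_word {l : List (Raag X)}
    (h : ∀ x ∈ l, x ∈ Set.range (Raag.of X) ∨ x⁻¹ ∈ Set.range (Raag.of X)) :
    ∃ w : List (U × Bool), wordProd X w = l.prod ∧ w.length = l.length := by
  induction l with
  | nil => exact ⟨[], rfl, rfl⟩
  | cons y l ih =>
    obtain ⟨w, hw, hl⟩ := ih fun x hx => h x (List.mem_cons_of_mem _ hx)
    rcases h y List.mem_cons_self with ⟨x, hx⟩ | ⟨x, hx⟩
    · exact ⟨(x, true) :: w, by simp [lelt, hx, hw], by simp [hl]⟩
    · refine ⟨(x, false) :: w, ?_, by simp [hl]⟩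
      have : y = (Raag.of X x)⁻¹ := by rw [hx, inv_inv]
      simp [lelt, this, hw]

lemma word_to_list (w : List (U × Bool)) :
    ∃ l : List (Raag X), (∀ x ∈ l, x ∈ Set.range (Raag.of X) ∨ x⁻¹ ∈ Set.range (Raag.of X)) ∧
      l.prod = wordProd X w ∧ l.length = w.length := by
  refine ⟨w.map (lelt X), ?_, rfl, by simp⟩
  intro x hx
  simp only [List.mem_map] at hx
  obtain ⟨a, _, rfl⟩ := hx
  cases a with | mk v b =>
    cases b
    · exact Or.inr ⟨v, by simp [lelt]⟩
    · exact Or.inl ⟨v, by simp [lelt]⟩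

lemma raagNorm_eq (X : SimpleGraph U) (g : Raag X) :
    raagNorm X g = sInf {n | ∃ w : List (U × Bool), wordProd X w = g ∧ w.length = n} := by
  unfold raagNorm wordLength
  congr 1
  ext n
  constructor
  · rintro ⟨l, hl, hprod, hlen⟩
    obtain ⟨w, hw, hwl⟩ := list_to_word hl
    exact ⟨w, by rw [hw, hprod], by rw [hwl, hlen]⟩
  · rintro ⟨w, hw, hlen⟩
    obtain ⟨l, hl, hprod, hllen⟩ := word_to_list (X := X) w
    exact ⟨l, hl, by rw [hprod, hw], by rw [hllen, hlen]⟩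

lemma exists_reduced_word (X : SimpleGraph U) (g : Raag X) :
    ∃ w : List (U × Bool), wordProd X w = g ∧ w.length = raagNorm X g ∧ IsReducedWord X w := by
  have hne : {n | ∃ w : List (U × Bool), wordProd X w = g ∧ w.length = n}.Nonempty := by
    obtain ⟨w, hw⟩ := wordProd_surjective X g
    exact ⟨w.length, w, hw, rfl⟩
  have hmem := Nat.sInf_mem hne
  obtain ⟨w, hw, hlen⟩ := hmem
  refine ⟨w, hw, by rw [hlen, raagNorm_eq], ?_⟩
  intro w' hw'
  rw [hlen]
  exact Nat.sInf_le ⟨w', by rw [hw', hw], rfl⟩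

lemma raagNorm_le_of_word (X : SimpleGraph U) {g : Raag X} {w : List (U × Bool)}
    (h : wordProd X w = g) : raagNorm X g ≤ w.length := by
  rw [raagNorm_eq]
  exact Nat.sInf_le ⟨w, h, rfl⟩

lemma raagNorm_one (X : SimpleGraph U) : raagNorm X (1 : Raag X) = 0 :=
  Nat.le_zero.mp (raagNorm_le_of_word X (wordProd_nil X))

lemma eq_one_of_raagNorm_eq_zero {X : SimpleGraph U} {g : Raag X}
    (h : raagNorm X g = 0) : g = 1 := by
  obtain ⟨w, hw, hlen, _⟩ := exists_reduced_word X g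
  rw [h] at hlen
  rw [← hw, List.length_eq_zero_iff.mp hlen, wordProd_nil]

lemma isReducedWord_nil (X : SimpleGraph U) : IsReducedWord X ([] : List (U × Bool)) :=
  fun w' _ => Nat.zero_le _

end RT
namespace RT

variable {U : Type*} {X : SimpleGraph U}

/-- One swap of adjacent commuting letters. -/
inductive Sw (X : SimpleGraph U) : List (U × Bool) → List (U × Bool) → Prop
  | head (a b : U × Bool) (t : List (U × Bool)) (h : comm X a.1 b.1) :
      Sw X (a :: b :: t) (b :: a :: t)
  | cons (c : U × Bool) {t t' : List (U × Bool)} : Sw X t t' → Sw X (c :: t) (c :: t')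

/-- Swap-equivalence. -/
def SwEq (X : SimpleGraph U) : List (U × Bool) → List (U × Bool) → Prop :=
  Relation.ReflTransGen (Sw X)

lemma Sw.symm {w u : List (U × Bool)} (h : Sw X w u) : Sw X u w := by
  induction h with
  | head a b t hc => exact Sw.head b a t (comm_symm hc)
  | cons c _ ih => exact Sw.cons c ih

lemma Sw.perm {w u : List (U × Bool)} (h : Sw X w u) : w.Perm u := by
  induction h with
  | head a b t _ => exact List.Perm.swap b a t
  | cons c _ ih => exact ih.cons c

lemma Sw.wordProd {w u : List (U × Bool)} (h : Sw X w u) :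
    wordProd X w = wordProd X u := by
  induction h with
  | head a b t hc =>
    simp only [wordProd_cons, ← mul_assoc]
    rw [lelt_commute hc]
  | cons c _ ih => simp only [wordProd_cons, ih]

namespace SwEq

lemma refl (w : List (U × Bool)) : SwEq X w w := Relation.ReflTransGen.refl

lemma trans {w u z : List (U × Bool)} (h1 : SwEq X w u) (h2 : SwEq X u z) : SwEq X w z :=
  Relation.ReflTransGen.trans h1 h2

lemma single {w u : List (U × Bool)} (h : Sw X w u) : SwEq X w u :=
  Relation.ReflTransGen.single h

lemma symm {w u : List (U × Bool)} (h : SwEq X w u) : SwEq X u w := by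
  induction h with
  | refl => exact .refl _
  | tail _ h ih => exact trans (single h.symm) ih

lemma perm {w u : List (U × Bool)} (h : SwEq X w u) : w.Perm u := by
  induction h with
  | refl => exact List.Perm.refl _
  | tail _ h ih => exact ih.trans h.perm

lemma wordProd {w u : List (U × Bool)} (h : SwEq X w u) :
    wordProd X w = wordProd X u := by
  induction h with
  | refl => rfl
  | tail _ h ih => exact ih.trans h.wordProd

lemma length_eq {w u : List (U × Bool)} (h : SwEq X w u) : w.length = u.length :=
  h.perm.length_eq

lemma cons {w u : List (U × Bool)} (c : U × Bool) (h : SwEq X w u) :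
    SwEq X (c :: w) (c :: u) := by
  induction h with
  | refl => exact .refl _
  | tail _ h ih => exact trans ih (single (Sw.cons c h))

lemma append_left {w u : List (U × Bool)} (A : List (U × Bool)) (h : SwEq X w u) :
    SwEq X (A ++ w) (A ++ u) := by
  induction A with
  | nil => exact h
  | cons a A ih => exact ih.cons a

end SwEq

lemma Sw.append_right {w u : List (U × Bool)} (h : Sw X w u) (B : List (U × Bool)) :
    Sw X (w ++ B) (u ++ B) := by
  induction h with
  | head a b t hc => exact Sw.head a b (t ++ B) hc
  | cons c _ ih => exact Sw.cons c ih

lemma SwEq.append_right {w u : List (U × Bool)} (h : SwEq X w u) (B : List (U × Bool)) :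
    SwEq X (w ++ B) (u ++ B) := by
  induction h with
  | refl => exact .refl _
  | tail _ h ih => exact ih.trans (SwEq.single (h.append_right B))

/-- Shuffling a letter through a block of letters it commutes with. -/
lemma swEq_middle {M : List (U × Bool)} (a : U × Bool) (B : List (U × Bool))
    (h : ∀ m ∈ M, comm X a.1 m.1) : SwEq X (a :: (M ++ B)) (M ++ a :: B) := by
  induction M with
  | nil => exact SwEq.refl _
  | cons m M ih =>
    refine SwEq.trans (SwEq.single (Sw.head a m (M ++ B) (h m (by simp)))) ?_
    exact SwEq.cons m (ih fun x hx => h x (by simp [hx]))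

open Classical in
/-- Multiply the letter `a` onto the word `u`, cancelling if possible. -/
noncomputable def push (X : SimpleGraph U) (a : U × Bool) : List (U × Bool) → List (U × Bool)
  | [] => [a]
  | b :: u => if b = linv a then u
      else if comm X a.1 b.1 then b :: push X a u else a :: b :: u

@[simp] lemma push_nil (a : U × Bool) : push X a [] = [a] := rfl

lemma push_cons_del {a b : U × Bool} (u : List (U × Bool)) (h : b = linv a) :
    push X a (b :: u) = u := by
  rw [push, if_pos h]

lemma push_cons_comm {a b : U × Bool} (u : List (U × Bool)) (h1 : b ≠ linv a)
    (h2 : comm X a.1 b.1) : push X a (b :: u) = b :: push X a u := by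
  rw [push, if_neg h1, if_pos h2]

lemma ne_linv_of_not_comm {a b : U × Bool} (h : ¬ comm X a.1 b.1) : b ≠ linv a := by
  intro hb
  exact h (by rw [hb, linv_fst]; exact comm_self X a.1)

lemma fst_eq_of_not_comm {a b : U × Bool} (h : ¬ comm X a.1 b.1) : a.1 ≠ b.1 := by
  intro hb
  exact h (Or.inl hb)

lemma push_cons_stop {a b : U × Bool} (u : List (U × Bool)) (h : ¬ comm X a.1 b.1) :
    push X a (b :: u) = a :: b :: u := by
  rw [push, if_neg (ne_linv_of_not_comm h), if_neg h]

lemma linv_eq_symm {a b : U × Bool} (h : b = linv a) : a = linv b := by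
  rw [h, linv_linv]

/-- The structure of a push: insertion after a maximal commuting prefix, or deletion of
the first cancelling partner. -/
lemma push_spec (X : SimpleGraph U) (a : U × Bool) (u : List (U × Bool)) :
    (∃ M B, u = M ++ B ∧ push X a u = M ++ a :: B ∧ (∀ m ∈ M, comm X a.1 m.1) ∧
      linv a ∉ M ∧ (∀ b ∈ B.head?, ¬ comm X a.1 b.1)) ∨
    (∃ M B, u = M ++ linv a :: B ∧ push X a u = M ++ B ∧ (∀ m ∈ M, comm X a.1 m.1) ∧
      linv a ∉ M) := by
  induction u with
  | nil =>
    left; exact ⟨[], [], rfl, by simp, by simp, by simp, by simp⟩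
  | cons b u ih =>
    by_cases hdel : b = linv a
    · right
      exact ⟨[], u, by rw [hdel]; rfl, push_cons_del u hdel, by simp, by simp⟩
    · by_cases hcomm : comm X a.1 b.1
      · rcases ih with ⟨M, B, h1, h2, h3, h4, h5⟩ | ⟨M, B, h1, h2, h3, h4⟩
        · left
          refine ⟨b :: M, B, by simp [h1], ?_, ?_, ?_, h5⟩
          · rw [push_cons_comm u hdel hcomm, h2]; rfl
          · intro m hm
            rcases List.mem_cons.mp hm with h | h
            · subst h; exact hcomm
            · exact h3 m h
          · simp only [List.mem_cons]; rintro (h | h); · exact hdel h.symm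
            · exact h4 h
        · right
          refine ⟨b :: M, B, by simp [h1], ?_, ?_, ?_⟩
          · rw [push_cons_comm u hdel hcomm, h2]; rfl
          · intro m hm
            rcases List.mem_cons.mp hm with h | h
            · subst h; exact hcomm
            · exact h3 m h
          · simp only [List.mem_cons]; rintro (h | h); · exact hdel h.symm
            · exact h4 h
      · left
        refine ⟨[], b :: u, rfl, by rw [push_cons_stop u hcomm]; rfl, by simp, by simp, ?_⟩
        intro c hc
        simp only [List.head?_cons, Option.mem_some_iff] at hc
        rw [← hc]; exact hcomm

lemma wordProd_push (X : SimpleGraph U) (a : U × Bool) (u : List (U × Bool)) :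
    wordProd X (push X a u) = lelt X a * wordProd X u := by
  induction u with
  | nil => simp
  | cons b u ih =>
    by_cases hdel : b = linv a
    · rw [push_cons_del u hdel, wordProd_cons, hdel, lelt_linv, ← mul_assoc, mul_inv_cancel,
        one_mul]
    · by_cases hcomm : comm X a.1 b.1
      · rw [push_cons_comm u hdel hcomm, wordProd_cons, ih, wordProd_cons, ← mul_assoc,
          ← mul_assoc, (lelt_commute hcomm).eq]
      · rw [push_cons_stop u hcomm, wordProd_cons, wordProd_cons]

/-- Normal form via iterated pushes. -/
noncomputable def nf (X : SimpleGraph U) : List (U × Bool) → List (U × Bool) :=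
  List.foldr (push X) []

@[simp] lemma nf_nil : nf X [] = [] := rfl

lemma nf_cons (a : U × Bool) (w : List (U × Bool)) : nf X (a :: w) = push X a (nf X w) := rfl

lemma wordProd_nf (X : SimpleGraph U) (w : List (U × Bool)) :
    wordProd X (nf X w) = wordProd X w := by
  induction w with
  | nil => rfl
  | cons a w ih => rw [nf_cons, wordProd_push, ih, wordProd_cons]

end RT
namespace RT

variable {U : Type*} {X : SimpleGraph U}

lemma linv_injective : Function.Injective (linv (U := U)) := by
  intro a b h
  rw [← linv_linv a, h, linv_linv]

/-- Exchange lemma: pushes of commuting letters commute up to swap-equivalence. -/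
lemma push_exchange {a b : U × Bool} (hab : comm X a.1 b.1) (u : List (U × Bool)) :
    SwEq X (push X a (push X b u)) (push X b (push X a u)) := by
  induction u with
  | nil =>
    by_cases hba : b = linv a
    · rw [push_nil, push_nil, push_cons_del [] hba,
        push_cons_del [] (linv_eq_symm hba)]
      exact SwEq.refl _
    · have hab' : a ≠ linv b := fun h => hba (linv_eq_symm h)
      rw [push_nil, push_nil, push_cons_comm [] hba hab, push_cons_comm [] hab' (comm_symm hab),
        push_nil, push_nil]
      exact (SwEq.single (Sw.head b a [] (comm_symm hab)))
  | cons c u ih =>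
    by_cases hcb : c = linv b
    · rw [push_cons_del u hcb]
      by_cases hca : c = linv a
      · have : a = b := linv_injective (hca.symm.trans hcb)
        subst this
        rw [push_cons_del u hca]
        exact SwEq.refl _
      · have hac : comm X a.1 c.1 := by
          have : c.1 = b.1 := by rw [hcb, linv_fst]
          rw [this]; exact hab
        rw [push_cons_comm u hca hac, push_cons_del (push X a u) hcb]
        exact SwEq.refl _
    · by_cases hbc : comm X b.1 c.1
      · rw [push_cons_comm u hcb hbc]
        by_cases hca : c = linv a
        · rw [push_cons_del (push X b u) hca, push_cons_del u hca]
          exact SwEq.refl _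
        · by_cases hac : comm X a.1 c.1
          · rw [push_cons_comm (push X b u) hca hac, push_cons_comm u hca hac,
              push_cons_comm (push X a u) hcb hbc]
            exact (ih).cons c
          · have hba : a ≠ linv b := by
              intro h
              exact hac (by rw [h, linv_fst]; exact hbc)
            rw [push_cons_stop (push X b u) hac, push_cons_stop u hac,
              push_cons_comm (c :: u) hba (comm_symm hab),
              push_cons_comm u hcb hbc]
            exact SwEq.refl _
      · rw [push_cons_stop u hbc]
        by_cases hba : b = linv a
        · rw [push_cons_del (c :: u) hba]
          have hac : ¬ comm X a.1 c.1 := by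
            intro h
            apply hbc
            have : a.1 = b.1 := by rw [hba, linv_fst]
            rw [← this]; exact h
          rw [push_cons_stop u hac, push_cons_del (c :: u) (linv_eq_symm hba)]
          exact SwEq.refl _
        · rw [push_cons_comm (c :: u) hba hab]
          have hca : c ≠ linv a := by
            intro h
            apply hbc
            have : c.1 = a.1 := by rw [h, linv_fst]
            rw [this]; exact comm_symm hab
          by_cases hac : comm X a.1 c.1
          · rw [push_cons_comm u hca hac, push_cons_stop (push X a u) hbc]
            exact SwEq.refl _
          · rw [push_cons_stop u hac]
            have hab' : a ≠ linv b := fun h => hba (linv_eq_symm h)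
            rw [push_cons_comm (c :: u) hab' (comm_symm hab), push_cons_stop u hbc]
            exact SwEq.single (Sw.head b a (c :: u) (comm_symm hab))

end RT
namespace RT

variable {U : Type*} {X : SimpleGraph U}

/-- Pushing a letter is compatible with swap-equivalence. -/
lemma push_congr_sw {u u' : List (U × Bool)} (a : U × Bool) (h : Sw X u u') :
    SwEq X (push X a u) (push X a u') := by
  induction h with
  | head c d B hcd =>
    by_cases hc : c = linv a
    · by_cases hd : d = linv a
      · rw [hc, hd]; exact SwEq.refl _
      · have had : comm X a.1 d.1 := by
          have : a.1 = c.1 := by rw [hc, linv_fst]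
          rw [this]; exact hcd
        rw [push_cons_del (d :: B) hc, push_cons_comm (c :: B) hd had,
          push_cons_del B hc]
        exact SwEq.refl _
    · by_cases hd : d = linv a
      · have hac : comm X a.1 c.1 := by
          have : a.1 = d.1 := by rw [hd, linv_fst]
          rw [this]; exact comm_symm hcd
        rw [push_cons_del (c :: B) hd, push_cons_comm (d :: B) hc hac,
          push_cons_del B hd]
        exact SwEq.refl _
      · by_cases hac : comm X a.1 c.1
        · by_cases had : comm X a.1 d.1
          · rw [push_cons_comm (d :: B) hc hac, push_cons_comm B hd had,
              push_cons_comm (c :: B) hd had, push_cons_comm B hc hac]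
            exact SwEq.single (Sw.head c d (push X a B) hcd)
          · rw [push_cons_comm (d :: B) hc hac, push_cons_stop B had,
              push_cons_stop (c :: B) had]
            refine SwEq.trans (SwEq.single (Sw.head c a (d :: B) (comm_symm hac))) ?_
            exact (SwEq.single (Sw.head c d B hcd)).cons a
        · by_cases had : comm X a.1 d.1
          · rw [push_cons_stop (d :: B) hac, push_cons_comm (c :: B) hd had,
              push_cons_stop B hac]
            refine SwEq.trans ?_ (SwEq.single (Sw.head a d (c :: B) had))
            exact (SwEq.single (Sw.head c d B hcd)).cons a
          · rw [push_cons_stop (d :: B) hac, push_cons_stop (c :: B) had]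
            exact (SwEq.single (Sw.head c d B hcd)).cons a
  | cons g hs ih =>
    rename_i t t'
    by_cases hg : g = linv a
    · rw [push_cons_del t hg, push_cons_del t' hg]
      exact SwEq.single hs
    · by_cases hag : comm X a.1 g.1
      · rw [push_cons_comm t hg hag, push_cons_comm t' hg hag]
        exact ih.cons g
      · rw [push_cons_stop t hag, push_cons_stop t' hag]
        exact ((SwEq.single hs).cons g).cons a

lemma push_congr {u u' : List (U × Bool)} (a : U × Bool) (h : SwEq X u u') :
    SwEq X (push X a u) (push X a u') := by
  induction h with
  | refl => exact SwEq.refl _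
  | tail _ hs ih => exact ih.trans (push_congr_sw a hs)

/-- A word has a letterwise redex. -/
def HasRedex (X : SimpleGraph U) (u : List (U × Bool)) : Prop :=
  ∃ (A : List (U × Bool)) (x : U) (e : Bool) (M B : List (U × Bool)),
    u = A ++ (x, e) :: (M ++ (x, !e) :: B) ∧ ∀ m ∈ M, comm X x m.1

def RedFree (X : SimpleGraph U) (u : List (U × Bool)) : Prop := ¬ HasRedex X u

lemma redFree_nil : RedFree X [] := by
  rintro ⟨A, x, e, M, B, h, -⟩
  exact absurd h (by simp)

lemma RedFree.tail {c : U × Bool} {u : List (U × Bool)} (h : RedFree X (c :: u)) :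
    RedFree X u := by
  rintro ⟨A, x, e, M, B, h1, h2⟩
  exact h ⟨c :: A, x, e, M, B, by rw [h1]; rfl, h2⟩

/-- Splitting lemma: locating a distinguished element in a concatenation. -/
lemma mem_split_of_append {α : Type*} {A B M Q : List α} {c : α} (h : A ++ B = M ++ c :: Q) :
    (∃ A₂, A = M ++ c :: A₂ ∧ Q = A₂ ++ B) ∨ (∃ B₁, M = A ++ B₁ ∧ B = B₁ ++ c :: Q) := by
  rcases List.append_eq_append_iff.mp h with ⟨a', ha1, ha2⟩ | ⟨c', hc1, hc2⟩
  · exact Or.inr ⟨a', ha1, ha2⟩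
  · cases c' with
    | nil => exact Or.inr ⟨[], by simp [hc1], by simpa using hc2.symm⟩
    | cons d A₂ =>
      rw [List.cons_append, List.cons.injEq] at hc2
      obtain ⟨rfl, hQ⟩ := hc2
      exact Or.inl ⟨A₂, hc1, hQ⟩

end RT
namespace RT

variable {U : Type*} {X : SimpleGraph U}

/-- Pushing preserves redex-freeness. -/
lemma RedFree.push {u : List (U × Bool)} (a : U × Bool) (hu : RedFree X u) :
    RedFree X (push X a u) := by
  rintro ⟨A, x, e, M, B, hEq, hM⟩
  rcases push_spec X a u with ⟨M₃, B₃, hu1, hp, hcomm3, hninv, hhead⟩ |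
    ⟨M₀, B₀, hu1, hp, hcomm0, hninv⟩
  · -- insertion case
    rw [hp] at hEq
    rcases mem_split_of_append hEq.symm with ⟨A₂, hA, hB₃⟩ | ⟨B₁, hM₃, hrest⟩
    · -- `a` lies in `A`:  the redex is inside `u`
      exact hu ⟨M₃ ++ A₂, x, e, M, B, by rw [hu1, hB₃]; simp, hM⟩
    · cases B₁ with
      | nil =>
        simp only [List.nil_append, List.cons.injEq] at hrest
        obtain ⟨rfl, hB₃⟩ := hrest
        cases M with
        | nil =>
          have := hhead (x, !e) (by rw [← hB₃]; rfl)
          exact this (comm_self X x)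
        | cons m M' =>
          have := hhead m (by rw [← hB₃]; rfl)
          exact this (hM m (by simp))
      | cons d B₁' =>
        simp only [List.cons_append, List.cons.injEq] at hrest
        obtain ⟨rfl, hrest⟩ := hrest
        rcases mem_split_of_append hrest with ⟨A₂, hMeq, hB₃⟩ | ⟨C, hB₁', hrest2⟩
        · -- `a` lies inside the middle `M`
          refine hu ⟨A, x, e, B₁' ++ A₂, B, ?_, ?_⟩
          · rw [hu1, hM₃, hB₃]; simp
          · intro m hm
            rw [hMeq] at hM
            rcases List.mem_append.mp hm with h | h
            · exact hM m (by simp [h])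
            · exact hM m (by simp [h])
        · cases C with
          | nil =>
            simp only [List.nil_append, List.cons.injEq] at hrest2
            obtain ⟨rfl, -⟩ := hrest2
            refine hninv ?_
            rw [hM₃]
            have : linv (x, !e) = (x, e) := by simp [linv]
            rw [this]
            simp
          | cons f C' =>
            simp only [List.cons_append, List.cons.injEq] at hrest2
            obtain ⟨rfl, hB⟩ := hrest2
            refine hu ⟨A, x, e, M, C' ++ B₃, ?_, hM⟩
            rw [hu1, hM₃, hB₁']
            simp
  · -- deletion case
    rw [hp] at hEq
    rcases mem_split_of_append hEq with ⟨A₂, hM₀, hrest⟩ | ⟨B₁, hA, hB₀⟩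
    · rcases mem_split_of_append hrest.symm with ⟨A₃, hA₂, hB⟩ | ⟨B₁, hMeq, hB₀⟩
      · -- whole redex inside `M₀`
        refine hu ⟨A, x, e, M, A₃ ++ linv a :: B₀, ?_, hM⟩
        rw [hu1, hM₀, hA₂]
        simp
      · -- redex straddles the deleted letter
        refine hu ⟨A, x, e, A₂ ++ linv a :: B₁, B, ?_, ?_⟩
        · rw [hu1, hM₀, hB₀]
          simp
        · intro m hm
          rw [hMeq] at hM
          rcases List.mem_append.mp hm with h | h
          · exact hM m (by simp [h])
          · rcases List.mem_cons.mp h with h | h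
            · subst h
              have h1 : comm X a.1 x := by
                have := hcomm0 (x, e) (by rw [hM₀]; simp)
                exact this
              simpa using comm_symm h1
            · exact hM m (by simp [h])
    · -- redex inside `B₀`
      exact hu ⟨M₀ ++ linv a :: B₁, x, e, M, B, by rw [hu1, hB₀]; simp, hM⟩

lemma redFree_nf (X : SimpleGraph U) (w : List (U × Bool)) : RedFree X (nf X w) := by
  induction w with
  | nil => exact redFree_nil
  | cons a w ih => exact ih.push a

/-- Pushing a letter then its inverse is trivial up to swaps, on redex-free words. -/
lemma push_push_linv {u : List (U × Bool)} (a : U × Bool) (hu : RedFree X u) :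
    SwEq X (push X a (push X (linv a) u)) u := by
  induction u with
  | nil =>
    rw [push_nil, push_cons_del [] rfl]
    exact SwEq.refl _
  | cons b u ih =>
    by_cases hb : b = a
    · rw [push_cons_del u (by rw [linv_linv]; exact hb), hb]
      rcases push_spec X a u with ⟨M, B, h1, h2, h3, -, -⟩ | ⟨M, B, h1, h2, h3, -⟩
      · rw [h2, h1]
        exact (swEq_middle a B h3).symm
      · exfalso
        refine hu ⟨[], a.1, a.2, M, B, ?_, h3⟩
        rw [hb, h1]
        simp [linv]
    · by_cases hcomm : comm X a.1 b.1
      · have hbinv : b ≠ linv (linv a) := by rw [linv_linv]; exact hb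
        rw [push_cons_comm u hbinv hcomm]
        by_cases hba : b = linv a
        · rw [push_cons_del _ hba]
          rcases push_spec X (linv a) u with ⟨M, B, h1, h2, h3, -, -⟩ | ⟨M, B, h1, h2, h3, -⟩
          · rw [h2, h1, hba]
            exact (swEq_middle (linv a) B h3).symm
          · exfalso
            refine hu ⟨[], a.1, !a.2, M, B, ?_, h3⟩
            rw [hba, h1, linv_linv]
            simp [linv]
        · rw [push_cons_comm _ hba hcomm]
          exact (ih hu.tail).cons b
      · have hba : b ≠ linv (linv a) := by
          rw [linv_linv]
          intro h
          exact (fst_eq_of_not_comm hcomm) (by rw [h])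
        rw [show push X (linv a) (b :: u) = linv a :: b :: u from push_cons_stop u hcomm,
          push_cons_del _ rfl]
        exact SwEq.refl _

end RT
namespace RT

variable {U : Type*} {X : SimpleGraph U}

/-- Fold a word onto a seed by pushes. -/
noncomputable def pfold (X : SimpleGraph U) (w z : List (U × Bool)) : List (U × Bool) :=
  List.foldr (push X) z w

@[simp] lemma pfold_nil (z : List (U × Bool)) : pfold X [] z = z := rfl

lemma pfold_cons (a : U × Bool) (w z : List (U × Bool)) :
    pfold X (a :: w) z = push X a (pfold X w z) := rfl

lemma pfold_append (w u z : List (U × Bool)) :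
    pfold X (w ++ u) z = pfold X w (pfold X u z) := List.foldr_append ..

lemma nf_eq_pfold (w : List (U × Bool)) : nf X w = pfold X w [] := rfl

lemma pfold_seed_congr {z z' : List (U × Bool)} (w : List (U × Bool)) (h : SwEq X z z') :
    SwEq X (pfold X w z) (pfold X w z') := by
  induction w with
  | nil => exact h
  | cons a w ih => exact push_congr a ih

lemma pfold_sw_left {w w' : List (U × Bool)} (z : List (U × Bool)) (h : Sw X w w') :
    SwEq X (pfold X w z) (pfold X w' z) := by
  induction h with
  | head a b t hc => exact push_exchange hc (pfold X t z)
  | cons c _ ih => exact push_congr c ih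

lemma pfold_swEq_left {w w' : List (U × Bool)} (z : List (U × Bool)) (h : SwEq X w w') :
    SwEq X (pfold X w z) (pfold X w' z) := by
  induction h with
  | refl => exact SwEq.refl _
  | tail _ h ih => exact ih.trans (pfold_sw_left z h)

lemma pfold_pullout {M : List (U × Bool)} (a : U × Bool) (y : List (U × Bool))
    (h : ∀ m ∈ M, comm X a.1 m.1) :
    SwEq X (pfold X M (push X a y)) (push X a (pfold X M y)) := by
  induction M with
  | nil => exact SwEq.refl _
  | cons m M ih =>
    rw [pfold_cons, pfold_cons]
    refine SwEq.trans (push_congr m (ih fun c hc => h c (by simp [hc]))) ?_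
    exact (push_exchange (comm_symm (h m (by simp))) (pfold X M y))

lemma redFree_pfold {z : List (U × Bool)} (w : List (U × Bool)) (hz : RedFree X z) :
    RedFree X (pfold X w z) := by
  induction w with
  | nil => exact hz
  | cons a w ih => exact ih.push a

lemma pfold_push_left {z : List (U × Bool)} (a : U × Bool) (u : List (U × Bool))
    (hz : RedFree X z) :
    SwEq X (pfold X (push X a u) z) (push X a (pfold X u z)) := by
  rcases push_spec X a u with ⟨M, B, h1, h2, h3, -, -⟩ | ⟨M, B, h1, h2, h3, -⟩
  · rw [h2, h1, pfold_append, pfold_append, pfold_cons]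
    exact pfold_pullout a (pfold X B z) h3
  · rw [h2, h1, pfold_append, pfold_append, pfold_cons]
    refine SwEq.symm (SwEq.trans (push_congr a (pfold_pullout (linv a) (pfold X B z) h3)) ?_)
    exact push_push_linv a (redFree_pfold M (redFree_pfold B hz))

lemma pfold_nf_left {z : List (U × Bool)} (w : List (U × Bool)) (hz : RedFree X z) :
    SwEq X (pfold X w z) (pfold X (nf X w) z) := by
  induction w with
  | nil => exact SwEq.refl _
  | cons a w ih =>
    rw [pfold_cons, nf_cons]
    exact SwEq.trans (push_congr a ih) (pfold_push_left a (nf X w) hz).symm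

/-- Same normal form up to swaps. -/
def NfRel (X : SimpleGraph U) (w u : List (U × Bool)) : Prop := SwEq X (nf X w) (nf X u)

lemma NfRel.refl (w : List (U × Bool)) : NfRel X w w := SwEq.refl _
lemma NfRel.symm' {w u : List (U × Bool)} (h : NfRel X w u) : NfRel X u w := SwEq.symm h
lemma NfRel.trans' {w u z : List (U × Bool)} (h1 : NfRel X w u) (h2 : NfRel X u z) :
    NfRel X w z := SwEq.trans h1 h2

lemma NfRel.append {w₁ w₂ u₁ u₂ : List (U × Bool)} (h1 : NfRel X w₁ w₂) (h2 : NfRel X u₁ u₂) :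
    NfRel X (w₁ ++ u₁) (w₂ ++ u₂) := by
  unfold NfRel at *
  rw [nf_eq_pfold, nf_eq_pfold, pfold_append, pfold_append]
  refine SwEq.trans (pfold_seed_congr w₁ h2) ?_
  refine SwEq.trans (pfold_nf_left w₁ (redFree_nf X u₂)) ?_
  refine SwEq.trans (pfold_swEq_left _ h1) ?_
  exact (pfold_nf_left w₂ (redFree_nf X u₂)).symm

lemma NfRel.cons {w u : List (U × Bool)} (a : U × Bool) (h : NfRel X w u) :
    NfRel X (a :: w) (a :: u) := push_congr a h

/-- The inverse word. -/
def invW (w : List (U × Bool)) : List (U × Bool) := (w.map linv).reverse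

@[simp] lemma invW_nil : invW ([] : List (U × Bool)) = [] := rfl

lemma invW_cons (a : U × Bool) (w : List (U × Bool)) :
    invW (a :: w) = invW w ++ [linv a] := by simp [invW]

lemma wordProd_invW (w : List (U × Bool)) :
    wordProd X (invW w) = (wordProd X w)⁻¹ := by
  induction w with
  | nil => simp
  | cons a w ih =>
    rw [invW_cons, wordProd_append, ih, wordProd_cons, wordProd_nil, lelt_linv,
      wordProd_cons, mul_inv_rev, mul_one]

lemma nfRel_cancel (w : List (U × Bool)) : NfRel X (w ++ invW w) [] := by
  induction w with
  | nil => exact NfRel.refl _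
  | cons a w ih =>
    have h1 : NfRel X ((w ++ invW w) ++ [linv a]) ([] ++ [linv a]) :=
      NfRel.append ih (NfRel.refl _)
    have h2 : NfRel X (a :: ((w ++ invW w) ++ [linv a])) (a :: [linv a]) := h1.cons a
    have h3 : NfRel X [a, linv a] [] := by
      unfold NfRel
      rw [show nf X [a, linv a] = push X a (push X (linv a) []) from rfl, push_nil,
        push_cons_del [] rfl]
      exact SwEq.refl _
    have heq : a :: (w ++ invW w) ++ [linv a] = (a :: w) ++ invW (a :: w) := by
      rw [invW_cons]; simp
    refine NfRel.trans' ?_ h3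
    rw [← heq]
    exact h2

lemma nfRel_cancel' (w : List (U × Bool)) : NfRel X (invW w ++ w) [] := by
  induction w with
  | nil => exact NfRel.refl _
  | cons a w ih =>
    have key : NfRel X (linv a :: a :: w) w := by
      unfold NfRel
      rw [nf_cons, nf_cons]
      have h0 := push_push_linv (X := X) (u := nf X w) (linv a) (redFree_nf X w)
      rw [linv_linv] at h0
      exact h0
    have h1 : NfRel X (invW w ++ (linv a :: a :: w)) (invW w ++ w) :=
      NfRel.append (NfRel.refl _) key
    have heq : invW (a :: w) ++ (a :: w) = invW w ++ (linv a :: a :: w) := by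
      rw [invW_cons]; simp
    rw [heq]
    exact h1.trans' ih

lemma nfRel_inv_congr {w u : List (U × Bool)} (h : NfRel X w u) :
    NfRel X (invW w) (invW u) := by
  have h1 : NfRel X (invW w) (invW w ++ (u ++ invW u)) := by
    have := (NfRel.append (NfRel.refl (X := X) (invW w)) (nfRel_cancel u).symm')
    simpa using this
  have h2 : NfRel X (invW w ++ (u ++ invW u)) ((invW w ++ w) ++ invW u) := by
    rw [← List.append_assoc]
    exact NfRel.append (NfRel.append (NfRel.refl _) h.symm') (NfRel.refl _)
  have h3 : NfRel X ((invW w ++ w) ++ invW u) ([] ++ invW u) :=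
    NfRel.append (nfRel_cancel' w) (NfRel.refl _)
  simpa using (h1.trans' h2).trans' h3

/-- The words modulo `NfRel`. -/
def nfSetoid (X : SimpleGraph U) : Setoid (List (U × Bool)) :=
  ⟨NfRel X, ⟨NfRel.refl, NfRel.symm', NfRel.trans'⟩⟩

abbrev NFQ (X : SimpleGraph U) := Quotient (nfSetoid X)

noncomputable instance : Group (NFQ X) where
  mul := Quotient.map₂ (· ++ ·) (fun _ _ h1 _ _ h2 => NfRel.append h1 h2)
  one := Quotient.mk _ []
  inv := Quotient.map invW (fun _ _ h => nfRel_inv_congr h)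
  mul_assoc a b c :=
    Quotient.inductionOn₃ a b c fun w u z =>
      congrArg (Quotient.mk (nfSetoid X)) (List.append_assoc w u z)
  one_mul a := Quotient.inductionOn a fun _ => rfl
  mul_one a := Quotient.inductionOn a fun w =>
      congrArg (Quotient.mk (nfSetoid X)) (List.append_nil w)
  inv_mul_cancel a := Quotient.inductionOn a fun w => Quotient.sound (nfRel_cancel' w)

lemma NFQ.mk_mul (w u : List (U × Bool)) :
    (Quotient.mk (nfSetoid X) w) * (Quotient.mk (nfSetoid X) u) =
      Quotient.mk (nfSetoid X) (w ++ u) := rfl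

lemma NFQ.mk_inv (w : List (U × Bool)) :
    (Quotient.mk (nfSetoid X) w)⁻¹ = Quotient.mk (nfSetoid X) (invW w) := rfl

lemma relsNFQ (X : SimpleGraph U) : ∀ r ∈ raagRels X,
    FreeGroup.lift (fun v => Quotient.mk (nfSetoid X) [(v, true)]) r = 1 := by
  rintro r ⟨u, v, hne, hadj, rfl⟩
  simp only [map_mul, map_inv, FreeGroup.lift_apply_of]
  rw [NFQ.mk_inv, NFQ.mk_inv, NFQ.mk_mul, NFQ.mk_mul, NFQ.mk_mul]
  refine Quotient.sound ?_
  show NfRel X ([(u, true)] ++ [(v, true)] ++ invW [(u, true)] ++ invW [(v, true)]) []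
  have hiu : invW [(u, true)] = [(u, false)] := rfl
  have hiv : invW [(v, true)] = [(v, false)] := rfl
  rw [hiu, hiv]
  unfold NfRel
  have huv : ((u, true) : U × Bool) ≠ linv (v, false) := by
    simp [linv, hne]
  have hvv : ((v, true) : U × Bool) = linv (v, false) := rfl
  have h1 : nf X [(u, true), (v, true), (u, false), (v, false)] = [] := by
    rw [show ([(u, true), (v, true), (u, false), (v, false)] : List (U × Bool)) =
      [(u, true)] ++ [(v, true)] ++ [(u, false)] ++ [(v, false)] from rfl]
    show push X (u, true) (push X (v, true) (push X (u, false) (push X (v, false) []))) = []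
    rw [push_nil]
    rw [push_cons_comm [] (by simp [linv, hne]) (Or.inr hadj)]
    rw [push_nil]
    rw [push_cons_del _ (show ((v, false) : U × Bool) = linv (v, true) from rfl)]
    rw [push_cons_del _ (show ((u, false) : U × Bool) = linv (u, true) from rfl)]
  rw [show ([(u, true)] ++ [(v, true)] ++ [(u, false)] ++ [(v, false)] : List (U × Bool)) =
    [(u, true), (v, true), (u, false), (v, false)] from rfl, h1]
  exact SwEq.refl _

/-- The homomorphism from the RAAG to the word quotient. -/
noncomputable def toNFQ (X : SimpleGraph U) : Raag X →* NFQ X :=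
  PresentedGroup.toGroup (relsNFQ X)

lemma toNFQ_of (X : SimpleGraph U) (v : U) :
    toNFQ X (Raag.of X v) = Quotient.mk (nfSetoid X) [(v, true)] :=
  PresentedGroup.toGroup.of (relsNFQ X)

lemma toNFQ_wordProd (w : List (U × Bool)) :
    toNFQ X (wordProd X w) = Quotient.mk (nfSetoid X) w := by
  induction w with
  | nil => rw [wordProd_nil, map_one]; rfl
  | cons a w ih =>
    rw [wordProd_cons, map_mul, ih]
    have : toNFQ X (lelt X a) = Quotient.mk (nfSetoid X) [a] := by
      cases a with | mk x b =>
        cases b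
        · have : lelt X ((x, false) : U × Bool) = (Raag.of X x)⁻¹ := by simp [lelt]
          rw [this, map_inv, toNFQ_of, NFQ.mk_inv]
          rfl
        · have : lelt X ((x, true) : U × Bool) = Raag.of X x := by simp [lelt]
          rw [this, toNFQ_of]
    rw [this, NFQ.mk_mul]
    rfl

/-- Main invariance theorem: equal elements have swap-equivalent normal forms. -/
theorem nf_invariant {w u : List (U × Bool)} (h : wordProd X w = wordProd X u) :
    SwEq X (nf X w) (nf X u) := by
  have := congrArg (toNFQ X) h
  rw [toNFQ_wordProd, toNFQ_wordProd] at this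
  exact Quotient.exact this

end RT
namespace RT

variable {U : Type*} {X : SimpleGraph U}

lemma length_push_le (a : U × Bool) (u : List (U × Bool)) :
    (push X a u).length ≤ u.length + 1 := by
  rcases push_spec X a u with ⟨M, B, h1, h2, -, -, -⟩ | ⟨M, B, h1, h2, -, -⟩
  · rw [h2, h1]; simp; omega
  · rw [h2, h1]; simp; omega

lemma nf_length_le (w : List (U × Bool)) : (nf X w).length ≤ w.length := by
  induction w with
  | nil => simp
  | cons a w ih =>
    rw [nf_cons]
    calc (push X a (nf X w)).length ≤ (nf X w).length + 1 := length_push_le a _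
    _ ≤ w.length + 1 := by omega

lemma isReduced_nf (w : List (U × Bool)) : IsReducedWord X (nf X w) := by
  intro u hu
  have h1 : wordProd X u = wordProd X w := by rw [hu, wordProd_nf]
  have h2 := nf_invariant h1
  calc (nf X w).length = (nf X u).length := (h2.length_eq).symm
  _ ≤ u.length := nf_length_le u

lemma nf_perm_of_length_eq {w : List (U × Bool)} (h : (nf X w).length = w.length) :
    (nf X w).Perm w := by
  induction w with
  | nil => simp
  | cons a w ih =>
    rw [nf_cons] at h ⊢
    rcases push_spec X a (nf X w) with ⟨M, B, h1, h2, -, -, -⟩ | ⟨M, B, h1, h2, -, -⟩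
    · have hlen : (nf X w).length = w.length := by
        rw [h1]
        rw [h2] at h
        simp at h ⊢
        omega
      have hperm := ih hlen
      rw [h2]
      refine List.Perm.trans (List.perm_middle) ?_
      rw [← h1]
      exact hperm.cons a
    · exfalso
      have hle := nf_length_le (X := X) w
      rw [h2] at h
      rw [h1] at hle
      simp at h hle
      omega

lemma reduced_nf_length {w : List (U × Bool)} (hw : IsReducedWord X w) :
    (nf X w).length = w.length := by
  have h1 := nf_length_le (X := X) w
  have h2 := hw (nf X w) (wordProd_nf X w)
  omega

lemma reduced_perm_nf {w : List (U × Bool)} (hw : IsReducedWord X w) :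
    (nf X w).Perm w := nf_perm_of_length_eq (reduced_nf_length hw)

/-- All reduced words representing an element have the same letters; the support is exactly
the set of letters of any reduced word. -/
lemma supp_reduced {w : List (U × Bool)} (hw : IsReducedWord X w) :
    raagSupp X (wordProd X w) = {x | ∃ b, (x, b) ∈ w} := by
  ext v
  constructor
  · rintro ⟨z, hz, hzw, b, hmem⟩
    have h1 : (nf X z).Perm z := reduced_perm_nf hz
    have h2 : (nf X w).Perm w := reduced_perm_nf hw
    have h3 := nf_invariant hzw
    exact ⟨b, h2.subset (h3.perm.subset (h1.symm.subset hmem))⟩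
  · rintro ⟨b, hmem⟩
    exact ⟨w, hw, rfl, b, hmem⟩

lemma mem_nf_subset {w : List (U × Bool)} {a : U × Bool} (h : a ∈ nf X w) : a ∈ w := by
  induction w generalizing a with
  | nil => simpa [nf_nil] using h
  | cons c w ih =>
    rw [nf_cons] at h
    rcases push_spec X c (nf X w) with ⟨M, B, h1, h2, -, -, -⟩ | ⟨M, B, h1, h2, -, -⟩
    · rw [h2] at h
      rcases List.mem_append.mp h with h | h
      · exact List.mem_cons_of_mem c (ih (by rw [h1]; exact List.mem_append.mpr (Or.inl h)))
      · rcases List.mem_cons.mp h with h | h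
        · exact List.mem_cons.mpr (Or.inl h)
        · exact List.mem_cons_of_mem c (ih (by rw [h1]; exact List.mem_append.mpr (Or.inr h)))
    · rw [h2] at h
      rcases List.mem_append.mp h with h | h
      · exact List.mem_cons_of_mem c (ih (by rw [h1]; exact List.mem_append.mpr (Or.inl h)))
      · refine List.mem_cons_of_mem c (ih ?_)
        rw [h1]
        exact List.mem_append.mpr (Or.inr (List.mem_cons_of_mem _ h))

/-- The support of the element of a word is contained in the vertices of the word. -/
lemma supp_sub_letters {M : List (U × Bool)} {v : U} (h : v ∈ raagSupp X (wordProd X M)) :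
    ∃ b, (v, b) ∈ M := by
  have h1 : raagSupp X (wordProd X M) = raagSupp X (wordProd X (nf X M)) := by
    rw [wordProd_nf]
  rw [h1, supp_reduced (isReduced_nf M)] at h
  obtain ⟨b, hb⟩ := h
  exact ⟨b, mem_nf_subset hb⟩

lemma supp_mul {g h : Raag X} {v : U} (hv : v ∈ raagSupp X (g * h)) :
    v ∈ raagSupp X g ∨ v ∈ raagSupp X h := by
  obtain ⟨w1, hw1⟩ := wordProd_surjective X g
  obtain ⟨w2, hw2⟩ := wordProd_surjective X h
  have hg : wordProd X (nf X w1) = g := by rw [wordProd_nf, hw1]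
  have hh : wordProd X (nf X w2) = h := by rw [wordProd_nf, hw2]
  have : g * h = wordProd X (nf X w1 ++ nf X w2) := by rw [wordProd_append, hg, hh]
  rw [this] at hv
  obtain ⟨b, hb⟩ := supp_sub_letters hv
  rcases List.mem_append.mp hb with hmem | hmem
  · left
    rw [← hg, supp_reduced (isReduced_nf w1)]
    exact ⟨b, hmem⟩
  · right
    rw [← hh, supp_reduced (isReduced_nf w2)]
    exact ⟨b, hmem⟩

lemma supp_lelt {a : U × Bool} {v : U} (h : v ∈ raagSupp X (lelt X a)) : v = a.1 := by
  have : lelt X a = wordProd X [a] := by simp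
  rw [this] at h
  obtain ⟨b, hb⟩ := supp_sub_letters h
  simp at hb
  exact congrArg Prod.fst hb.symm ▸ rfl

lemma supp_inv {g : Raag X} {v : U} (h : v ∈ raagSupp X g⁻¹) : v ∈ raagSupp X g := by
  obtain ⟨w1, hw1⟩ := wordProd_surjective X g
  have hg : wordProd X (nf X w1) = g := by rw [wordProd_nf, hw1]
  have : g⁻¹ = wordProd X (invW (nf X w1)) := by rw [wordProd_invW, hg]
  rw [this] at h
  obtain ⟨b, hb⟩ := supp_sub_letters h
  rw [← hg, supp_reduced (isReduced_nf w1)]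
  have : ((v, b) : U × Bool) ∈ (nf X w1).map linv := by
    rw [invW] at hb
    exact List.mem_reverse.mp hb
  obtain ⟨c, hc, hcv⟩ := List.mem_map.mp this
  refine ⟨c.2, ?_⟩
  have h5 := congrArg Prod.fst hcv
  simp only [linv_fst] at h5
  rw [← h5]
  simpa using hc

lemma supp_one {v : U} (h : v ∈ raagSupp X (1 : Raag X)) : False := by
  have : (1 : Raag X) = wordProd X [] := rfl
  rw [this] at h
  obtain ⟨b, hb⟩ := supp_sub_letters h
  simp at hb

end RT
namespace RT

variable {U : Type*} {X : SimpleGraph U}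

lemma commute_wordProd {x : U} {M : List (U × Bool)} (e : Bool)
    (h : ∀ m ∈ M, comm X x m.1) : Commute (lelt X (x, e)) (wordProd X M) := by
  rw [wordProd_def]
  refine Commute.list_prod_right _ _ ?_
  intro y hy
  obtain ⟨m, hm, rfl⟩ := List.mem_map.mp hy
  exact lelt_commute (h m hm)

/-- Deletion of a cancelling pair of `x`-letters (with letterwise-commuting middle). -/
inductive DelV (X : SimpleGraph U) (x : U) : List (U × Bool) → List (U × Bool) → Prop
  | head (e : Bool) (M B : List (U × Bool)) (h : ∀ m ∈ M, comm X x m.1) :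
      DelV X x ((x, e) :: (M ++ (x, !e) :: B)) (M ++ B)
  | cons (c : U × Bool) {t t' : List (U × Bool)} : DelV X x t t' → DelV X x (c :: t) (c :: t')

lemma DelV.wordProd {x : U} {w u : List (U × Bool)} (h : DelV X x w u) :
    wordProd X w = wordProd X u := by
  induction h with
  | head e M B hM =>
    rw [wordProd_cons, wordProd_append, wordProd_cons, wordProd_append]
    have h1 : lelt X ((x, !e) : U × Bool) = (lelt X ((x, e) : U × Bool))⁻¹ := by
      rw [← lelt_linv]; rfl
    rw [h1, ← mul_assoc, ← mul_assoc, (commute_wordProd e hM).eq, mul_assoc, ← mul_assoc,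
      mul_assoc (_root_.wordProd X M), mul_inv_cancel, mul_one]
  | cons c _ ih => rw [wordProd_cons, wordProd_cons, ih]

open Classical in
/-- The number of occurrences of the vertex `v` among the letters of `w`. -/
noncomputable def cnt (v : U) (w : List (U × Bool)) : ℕ :=
  w.countP (fun l => decide (l.1 = v))

@[simp] lemma cnt_nil (v : U) : cnt v ([] : List (U × Bool)) = 0 := rfl

open Classical in
lemma cnt_cons (v : U) (a : U × Bool) (w : List (U × Bool)) :
    cnt v (a :: w) = cnt v w + (if a.1 = v then 1 else 0) := by
  unfold cnt
  rw [List.countP_cons]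
  by_cases h : a.1 = v <;> simp [h]

open Classical in
lemma cnt_append (v : U) (w u : List (U × Bool)) :
    cnt v (w ++ u) = cnt v w + cnt v u := List.countP_append

lemma cnt_perm {v : U} {w u : List (U × Bool)} (h : w.Perm u) : cnt v w = cnt v u :=
  h.countP_eq _

lemma DelV.cnt_le {x v : U} {w u : List (U × Bool)} (h : DelV X x w u) :
    cnt v u ≤ cnt v w := by
  induction h with
  | head e M B hM =>
    rw [cnt_cons, cnt_append, cnt_append, cnt_cons]
    omega
  | cons c _ ih => rw [cnt_cons, cnt_cons]; omega

lemma DelV.cnt_lt_self {x : U} {w u : List (U × Bool)} (h : DelV X x w u) :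
    cnt x u < cnt x w := by
  induction h with
  | head e M B hM =>
    rw [cnt_cons, cnt_append, cnt_append, cnt_cons]
    simp
  | cons c _ ih => rw [cnt_cons, cnt_cons]; omega

lemma DelV.cnt_eq_of_ne {x v : U} {w u : List (U × Bool)} (h : DelV X x w u) (hxv : x ≠ v) :
    cnt v w = cnt v u := by
  induction h with
  | head e M B hM =>
    rw [cnt_cons, cnt_append, cnt_append, cnt_cons]
    simp [hxv]
  | cons c _ ih => rw [cnt_cons, cnt_cons, ih]

/-- A rewriting step: a swap or a deletion. -/
def Step (X : SimpleGraph U) (w u : List (U × Bool)) : Prop :=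
  Sw X w u ∨ ∃ x, DelV X x w u

def Chain (X : SimpleGraph U) : List (U × Bool) → List (U × Bool) → Prop :=
  Relation.ReflTransGen (Step X)

lemma Step.cnt_le {v : U} {w u : List (U × Bool)} (h : Step X w u) : cnt v u ≤ cnt v w := by
  rcases h with h | ⟨x, h⟩
  · rw [cnt_perm h.perm]
  · exact h.cnt_le

lemma Chain.cnt_le {v : U} {w u : List (U × Bool)} (h : Chain X w u) : cnt v u ≤ cnt v w := by
  induction h with
  | refl => exact le_refl _
  | tail _ h ih => exact le_trans h.cnt_le ih

lemma Step.cons {w u : List (U × Bool)} (c : U × Bool) (h : Step X w u) :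
    Step X (c :: w) (c :: u) := by
  rcases h with h | ⟨x, h⟩
  · exact Or.inl (Sw.cons c h)
  · exact Or.inr ⟨x, DelV.cons c h⟩

lemma Chain.cons {w u : List (U × Bool)} (c : U × Bool) (h : Chain X w u) :
    Chain X (c :: w) (c :: u) := by
  induction h with
  | refl => exact Relation.ReflTransGen.refl
  | tail _ h ih => exact Relation.ReflTransGen.tail ih (h.cons c)

lemma swEq_chain {w u : List (U × Bool)} (h : SwEq X w u) : Chain X w u := by
  induction h with
  | refl => exact Relation.ReflTransGen.refl
  | tail _ h ih => exact Relation.ReflTransGen.tail ih (Or.inl h)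

lemma chain_nf (w : List (U × Bool)) : Chain X w (nf X w) := by
  induction w with
  | nil => exact Relation.ReflTransGen.refl
  | cons a w ih =>
    refine Relation.ReflTransGen.trans (ih.cons a) ?_
    rw [nf_cons]
    rcases push_spec X a (nf X w) with ⟨M, B, h1, h2, h3, -, -⟩ | ⟨M, B, h1, h2, h3, -⟩
    · rw [h2, h1]
      exact swEq_chain (swEq_middle a B h3)
    · rw [h2, h1]
      refine Relation.ReflTransGen.single (Or.inr ⟨a.1, ?_⟩)
      have := DelV.head (X := X) (x := a.1) a.2 M B h3
      exact this

lemma cnt_nf_le (v : U) (w : List (U × Bool)) : cnt v (nf X w) ≤ cnt v w :=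
  (chain_nf w).cnt_le

/-- Safety of an element for the vertex `v`: its support avoids the link of `v`. -/
def SCE (X : SimpleGraph U) (v : U) (g : Raag X) : Prop :=
  ∀ u ∈ raagSupp X g, ¬ X.Adj v u

lemma SCE.one : SCE X v (1 : Raag X) := fun u hu => absurd hu (by intro h; exact supp_one h)

lemma SCE.mul {g h : Raag X} (hg : SCE X v g) (hh : SCE X v h) : SCE X v (g * h) := by
  intro u hu
  rcases supp_mul hu with h1 | h1
  · exact hg u h1
  · exact hh u h1

lemma SCE.inv {g : Raag X} (hg : SCE X v g) : SCE X v g⁻¹ := fun u hu => hg u (supp_inv hu)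

lemma SCE.letter {c : U × Bool} (h : ¬ X.Adj v c.1) : SCE X v (lelt X c) := by
  intro u hu
  rw [supp_lelt hu]
  exact h

lemma SCE.letter_comm {c : U × Bool} (h : comm X v c.1) : SCE X v (lelt X c) := by
  refine SCE.letter ?_
  rcases h with h | h
  · rw [← h]; exact X.irrefl
  · exact h

lemma SCE.of_eq {g h : Raag X} (he : h = g) (hg : SCE X v g) : SCE X v h := he ▸ hg

/-- A cancellation of `v`, as an inductive predicate. -/
inductive HC (X : SimpleGraph U) (v : U) : List (U × Bool) → Prop
  | head (e : Bool) (M Q : List (U × Bool)) (h : SCE X v (wordProd X M)) :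
      HC X v ((v, e) :: (M ++ (v, !e) :: Q))
  | cons (c : U × Bool) {t : List (U × Bool)} : HC X v t → HC X v (c :: t)

lemma hc_iff {v : U} {w : List (U × Bool)} : HC X v w ↔ HasCancellationOf X w v := by
  constructor
  · intro h
    induction h with
    | head e M Q hM => exact ⟨[], M, Q, e, rfl, hM⟩
    | cons c _ ih =>
      obtain ⟨w₁, w', w₂, b, heq, hs⟩ := ih
      exact ⟨c :: w₁, w', w₂, b, by rw [heq]; rfl, hs⟩
  · rintro ⟨w₁, w', w₂, b, heq, hs⟩
    subst heq
    induction w₁ with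
    | nil => exact HC.head b w' w₂ hs
    | cons c w₁ ih => exact HC.cons c ih

end RT
namespace RT

variable {U : Type*} {X : SimpleGraph U}

/-- The ways the middle of a cancellation pattern can change under a move. -/
def MTrans (X : SimpleGraph U) (v : U) (g g' : Raag X) : Prop :=
  g' = g ∨ ∃ c : U × Bool, comm X v c.1 ∧ (g' = g * lelt X c ∨ g' = g * (lelt X c)⁻¹)

lemma MTrans.refl (g : Raag X) : MTrans X v g g := Or.inl rfl

lemma MTrans.sce {g g' : Raag X} (h : MTrans X v g g') (hg : SCE X v g) : SCE X v g' := by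
  rcases h with rfl | ⟨c, hc, rfl | rfl⟩
  · exact hg
  · exact hg.mul (SCE.letter_comm hc)
  · exact hg.mul (SCE.letter_comm hc).inv

lemma MTrans.mul_left {g g' h : Raag X} (hm : MTrans X v g g') :
    MTrans X v (h * g) (h * g') := by
  rcases hm with rfl | ⟨c, hc, rfl | rfl⟩
  · exact MTrans.refl _
  · exact Or.inr ⟨c, hc, Or.inl (by rw [mul_assoc])⟩
  · exact Or.inr ⟨c, hc, Or.inr (by rw [mul_assoc])⟩

/-- Inversion for the cancellation predicate. -/
lemma hc_cons_elim {v : U} {c : U × Bool} {t : List (U × Bool)} (h : HC X v (c :: t)) :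
    HC X v t ∨ ∃ (e : Bool) (M Q : List (U × Bool)),
      c = (v, e) ∧ t = M ++ (v, !e) :: Q ∧ SCE X v (wordProd X M) := by
  generalize hw : c :: t = w at h
  cases h with
  | head e M Q hM =>
    rw [List.cons.injEq] at hw
    exact Or.inr ⟨e, M, Q, hw.1, hw.2, hM⟩
  | cons c' h' =>
    rw [List.cons.injEq] at hw
    exact Or.inl (hw.2.symm ▸ h')

/-- Transport of an anchored pattern backwards through a swap. -/
lemma sw_tail_pattern {t t' : List (U × Bool)} {v : U} (ε : Bool) (hs : Sw X t t') :
    ∀ M Q, t' = M ++ (v, ε) :: Q →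
    ∃ M' Q', t = M' ++ (v, ε) :: Q' ∧ MTrans X v (wordProd X M) (wordProd X M') := by
  induction hs with
  | head a b s hab =>
    intro M Q heq
    cases M with
    | nil =>
      simp only [List.nil_append, List.cons.injEq] at heq
      obtain ⟨hb, hQ⟩ := heq
      subst hb; subst hQ
      refine ⟨[a], s, rfl, Or.inr ⟨a, ?_, Or.inl (by simp)⟩⟩
      exact comm_symm (show comm X a.1 v from hab)
    | cons m M₁ =>
      simp only [List.cons_append, List.cons.injEq] at heq
      obtain ⟨hb, heq⟩ := heq
      subst hb
      cases M₁ with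
      | nil =>
        simp only [List.nil_append, List.cons.injEq] at heq
        obtain ⟨ha, hQ⟩ := heq
        subst ha; subst hQ
        refine ⟨[], b :: s, rfl, Or.inr ⟨b, ?_, Or.inr (by simp)⟩⟩
        exact show comm X v b.1 from hab
      | cons m₁ M₂ =>
        simp only [List.cons_append, List.cons.injEq] at heq
        obtain ⟨ha, hs'⟩ := heq
        subst ha; subst hs'
        refine ⟨a :: b :: M₂, Q, rfl, Or.inl ?_⟩
        rw [wordProd_cons, wordProd_cons, wordProd_cons, wordProd_cons,
          ← mul_assoc, ← mul_assoc, (lelt_commute hab).eq]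
  | cons c hss ih =>
    intro M Q heq
    cases M with
    | nil =>
      simp only [List.nil_append, List.cons.injEq] at heq
      obtain ⟨rfl, rfl⟩ := heq
      exact ⟨[], _, rfl, MTrans.refl _⟩
    | cons m M₁ =>
      simp only [List.cons_append, List.cons.injEq] at heq
      obtain ⟨hc, heq⟩ := heq
      subst hc
      obtain ⟨M₁', Q', ht, htr⟩ := ih M₁ Q heq
      refine ⟨c :: M₁', Q', by rw [ht]; rfl, ?_⟩
      rw [wordProd_cons, wordProd_cons]
      exact htr.mul_left

/-- Cancellations are preserved backwards by swaps. -/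
lemma hc_sw {v : U} {w w' : List (U × Bool)} (hs : Sw X w w') (h : HC X v w') :
    HC X v w := by
  induction hs with
  | head a b t hab =>
    rcases hc_cons_elim h with h2 | ⟨e, M, Q, rfl, heq, hM⟩
    · rcases hc_cons_elim h2 with h3 | ⟨e, M, Q, rfl, heq, hM⟩
      · exact HC.cons a (HC.cons b h3)
      · rw [heq]
        refine HC.head e (b :: M) Q ?_
        refine SCE.of_eq (wordProd_cons X b M) ?_
        exact (SCE.letter_comm (show comm X v b.1 from hab)).mul hM
    · -- b = (v,e), a :: t = M ++ (v,!e) :: Q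
      cases M with
      | nil =>
        simp only [List.nil_append, List.cons.injEq] at heq
        obtain ⟨ha, ht⟩ := heq
        subst ha; subst ht
        have h0 : HC X v ((v, !e) :: ([] ++ (v, !(!e)) :: t)) :=
          HC.head (!e) [] t (SCE.of_eq (wordProd_nil X) SCE.one)
        simpa [Bool.not_not] using h0
      | cons m M₁ =>
        simp only [List.cons_append, List.cons.injEq] at heq
        obtain ⟨ha, ht⟩ := heq
        subst ha; subst ht
        refine HC.cons a (HC.head e M₁ Q ?_)
        have hcm : comm X v a.1 := comm_symm (show comm X a.1 v from hab)
        refine SCE.of_eq (g := (lelt X a)⁻¹ * wordProd X (a :: M₁)) ?_ ?_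
        · rw [wordProd_cons, ← mul_assoc, inv_mul_cancel, one_mul]
        · exact (SCE.letter_comm hcm).inv.mul hM
  | cons c hss ih =>
    rcases hc_cons_elim h with h2 | ⟨e, M, Q, rfl, heq, hM⟩
    · exact HC.cons c (ih h2)
    · obtain ⟨M', Q', ht, htr⟩ := sw_tail_pattern (!e) hss M Q heq
      rw [ht]
      exact HC.head e M' Q' (htr.sce hM)

lemma hc_swEq {v : U} {w w' : List (U × Bool)} (hs : SwEq X w w') (h : HC X v w') :
    HC X v w := by
  induction hs with
  | refl => exact h
  | tail _ hstep ih => exact ih (hc_sw hstep h)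

/-- Transport of an anchored pattern backwards through a deletion of `x`-letters, `x ≠ v`. -/
lemma del_tail_pattern {t u : List (U × Bool)} {x v : U} (ε : Bool) (hd : DelV X x t u)
    (hxv : x ≠ v) :
    ∀ M Q, u = M ++ (v, ε) :: Q →
    ∃ M' Q', t = M' ++ (v, ε) :: Q' ∧ MTrans X v (wordProd X M) (wordProd X M') := by
  induction hd with
  | head e M₀ B₀ hM₀ =>
    intro M Q heq
    rcases mem_split_of_append heq with ⟨A₂, hM₀e, hQ⟩ | ⟨B₁, hMe, hB₀⟩
    · -- the anchor is inside M₀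
      have hcvx : comm X v x := by
        have := hM₀ (v, ε) (by rw [hM₀e]; simp)
        exact comm_symm this
      have hMcomm : ∀ m ∈ M, comm X x m.1 := by
        intro m hm
        exact hM₀ m (by rw [hM₀e]; simp [hm])
      refine ⟨(x, e) :: M, A₂ ++ (x, !e) :: B₀, ?_, ?_⟩
      · rw [hM₀e]; simp
      · refine Or.inr ⟨(x, e), hcvx, Or.inl ?_⟩
        rw [wordProd_cons, (commute_wordProd e hMcomm).eq]
    · -- the anchor is inside B₀
      refine ⟨(x, e) :: (M₀ ++ (x, !e) :: B₁), Q, ?_, Or.inl ?_⟩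
      · rw [hB₀]; simp
      · have := DelV.wordProd (DelV.head (X := X) e M₀ B₁ hM₀)
        rw [this, hMe, wordProd_append]
  | cons c hd0 ih =>
    intro M Q heq
    cases M with
    | nil =>
      simp only [List.nil_append, List.cons.injEq] at heq
      obtain ⟨rfl, rfl⟩ := heq
      exact ⟨[], _, rfl, MTrans.refl _⟩
    | cons m M₁ =>
      simp only [List.cons_append, List.cons.injEq] at heq
      obtain ⟨hc, heq⟩ := heq
      subst hc
      obtain ⟨M₁', Q', ht, htr⟩ := ih M₁ Q heq
      refine ⟨c :: M₁', Q', by rw [ht]; rfl, ?_⟩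
      rw [wordProd_cons, wordProd_cons]
      exact htr.mul_left

/-- Cancellations of `v` are preserved backwards by deletions of `x`-pairs, `x ≠ v`. -/
lemma hc_del {x v : U} (hxv : x ≠ v) {w u : List (U × Bool)} (hd : DelV X x w u)
    (h : HC X v u) : HC X v w := by
  induction hd with
  | head e M₀ B₀ hM₀ =>
    obtain ⟨A, Mm, Q, b, heq, hs⟩ := hc_iff.mp h
    rcases mem_split_of_append heq with ⟨A₂, hM₀e, hrest⟩ | ⟨B₁, hAe, hB₀⟩
    · rcases mem_split_of_append hrest.symm with ⟨A₃, hA₂, hQ⟩ | ⟨B₁, hMm, hB₀⟩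
      · -- whole pattern inside M₀
        refine hc_iff.mpr ⟨(x, e) :: A, Mm, A₃ ++ (x, !e) :: B₀, b, ?_, hs⟩
        rw [hM₀e, hA₂]
        simp
      · -- pattern straddles the pair
        have hnadj : ¬ X.Adj v x := by
          have h1 : comm X x v := by
            have := hM₀ (v, b) (by rw [hM₀e]; simp)
            exact this
          rcases h1 with h1 | h1
          · exact absurd h1 hxv
          · intro h2; exact h1 h2.symm
        have hA₂comm : ∀ m ∈ A₂, comm X x m.1 := by
          intro m hm
          exact hM₀ m (by rw [hM₀e]; simp [hm])
        refine hc_iff.mpr ⟨(x, e) :: A, A₂ ++ (x, !e) :: B₁, Q, b, ?_, ?_⟩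
        · rw [hM₀e, hB₀]
          simp
        · refine SCE.of_eq (g := lelt X ((x, !e)) * wordProd X Mm) ?_ ?_
          · rw [hMm, wordProd_append, wordProd_cons, wordProd_append, ← mul_assoc,
              ← mul_assoc, (commute_wordProd (!e) hA₂comm).eq]
          · exact (SCE.letter (c := ((x, !e) : U × Bool)) hnadj).mul hs
    · -- pattern inside B₀
      refine hc_iff.mpr ⟨(x, e) :: (M₀ ++ (x, !e) :: B₁), Mm, Q, b, ?_, hs⟩
      rw [hB₀]
      simp
  | cons c hd0 ih =>
    rcases hc_cons_elim h with h2 | ⟨e, M, Q, rfl, heq, hM⟩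
    · exact HC.cons c (ih h2)
    · obtain ⟨M', Q', ht, htr⟩ := del_tail_pattern (!e) hd0 hxv M Q heq
      rw [ht]
      exact HC.head e M' Q' (htr.sce hM)

end RT
namespace RT

variable {U : Type*} {X : SimpleGraph U}

lemma chain_transport {v : U} {w z : List (U × Bool)} (hc : Chain X w z)
    (h : HC X v z) : cnt v w = cnt v z → HC X v w := by
  induction hc using Relation.ReflTransGen.head_induction_on with
  | refl => intro _; exact h
  | @head w' m hstep hchain ih =>
    intro hcnt
    have h1 : cnt v z ≤ cnt v m := Chain.cnt_le hchain
    have h2 : cnt v m ≤ cnt v w' := hstep.cnt_le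
    have h3 : cnt v m = cnt v z := by omega
    have hm : HC X v m := ih h3
    rcases hstep with hsw | ⟨x, hd⟩
    · exact hc_sw hsw hm
    · have hxv : x ≠ v := by
        intro hx
        subst hx
        have := hd.cnt_lt_self
        omega
      exact hc_del hxv hd hm

lemma lemmaM {v : U} : ∀ (w u : List (U × Bool)), wordProd X w = wordProd X u →
    cnt v u < cnt v w → HC X v w := by
  intro w
  induction w with
  | nil =>
    intro u hp hc
    simp at hc
  | cons a w' ih =>
    intro u hpu hcnt
    have hinv : cnt v (nf X (a :: w')) = cnt v (nf X u) := cnt_perm (nf_invariant hpu).perm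
    have hnfu : cnt v (nf X u) ≤ cnt v u := cnt_nf_le v u
    have h2 : cnt v (nf X (a :: w')) < cnt v (a :: w') := by omega
    rw [nf_cons] at h2
    rcases push_spec X a (nf X w') with ⟨M, B, h1', h2', h3', -, -⟩ | ⟨M, B, h1', h2', h3', -⟩
    · -- insertion: counts drop already in the tail
      rw [h2'] at h2
      have h4 : cnt v (nf X w') < cnt v w' := by
        rw [h1', cnt_append]
        rw [cnt_append, cnt_cons, cnt_cons] at h2
        omega
      exact HC.cons a (ih (nf X w') (wordProd_nf X w').symm h4)
    · -- deletion of an `a`-pair in the normal form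
      by_cases hlt : cnt v (nf X w') < cnt v w'
      · exact HC.cons a (ih (nf X w') (wordProd_nf X w').symm hlt)
      · have heq : cnt v (nf X w') = cnt v w' := le_antisymm (cnt_nf_le v w') (not_lt.mp hlt)
        have hav : a.1 = v := by
          by_contra hne
          rw [h2'] at h2
          rw [h1', cnt_append, cnt_cons] at heq
          rw [cnt_append, cnt_cons] at h2
          simp only [linv_fst] at heq
          simp [hne] at h2 heq
          omega
        have haa : a = (v, a.2) := Prod.ext hav rfl
        have hz : HC X v (a :: nf X w') := by
          rw [h1']
          have hsh : a :: (M ++ linv a :: B) = (v, a.2) :: (M ++ (v, !a.2) :: B) := by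
            rw [haa]
            rfl
          rw [hsh]
          refine HC.head a.2 M B ?_
          intro u' hu'
          obtain ⟨b, hb⟩ := supp_sub_letters hu'
          have h5 := h3' (u', b) hb
          rw [hav] at h5
          rcases h5 with h | h
          · exact (show v = u' from h) ▸ X.irrefl
          · exact h
        have hchain : Chain X (a :: w') (a :: nf X w') := (chain_nf w').cons _
        refine chain_transport hchain hz ?_
        rw [cnt_cons, cnt_cons, heq]

lemma cancellation_of_cnt_lt {v : U} {w u : List (U × Bool)}
    (hp : wordProd X w = wordProd X u) (hc : cnt v u < cnt v w) :
    HasCancellationOf X w v := hc_iff.mp (lemmaM w u hp hc)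

end RT
namespace RT

section App

variable {V V' : Type*} [LinearOrder V'] [DecidableEq V]
variable {Γ : SimpleGraph V} {Γ' : SimpleGraph V'} {p : V' → V} {T : Finset V'}

local notation "XT" => (Γ'.induce (T : Set V'))

lemma blockProd_true (L : List (↥(T : Set V'))) :
    wordProd XT (L.map (fun t => (t, true))) = (L.map (Raag.of XT)).prod := by
  induction L with
  | nil => rfl
  | cons t L ih =>
    rw [List.map_cons, wordProd_cons, List.map_cons, List.prod_cons, ih]
    rfl

lemma blockProd_false (L : List (↥(T : Set V'))) :
    wordProd XT (L.reverse.map (fun t => (t, false))) = ((L.map (Raag.of XT)).prod)⁻¹ := by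
  induction L with
  | nil => simp
  | cons t L ih =>
    have h1 : wordProd XT [((t : ↥(T : Set V')), false)] = (Raag.of XT t)⁻¹ := by
      show lelt XT (t, false) * 1 = _
      rw [mul_one]
      rfl
    rw [List.reverse_cons, List.map_append, wordProd_append, ih]
    show _ * wordProd XT [((t : ↥(T : Set V')), false)] = _
    rw [h1, List.map_cons, List.prod_cons, mul_inv_rev]

lemma homWord_cons (l : V × Bool) (w : List (V × Bool)) :
    homWord p T (l :: w) =
      (if l.2 then (liftSubVerts p T l.1).map (fun t => (t, true))
       else ((liftSubVerts p T l.1).reverse).map (fun t => (t, false))) ++ homWord p T w := by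
  unfold homWord
  rw [List.flatMap_cons]

lemma homWord_wordProd (φ : Raag Γ →* Raag XT) (hφ : IsPhi Γ Γ' p T φ)
    (w : List (V × Bool)) :
    wordProd XT (homWord p T w) = φ (wordProd Γ w) := by
  induction w with
  | nil =>
    rw [wordProd_nil, map_one]
    rfl
  | cons l w ih =>
    rw [homWord_cons, wordProd_append, ih, wordProd_cons, map_mul]
    congr 1
    cases l with | mk x b =>
      cases b
      · rw [if_neg (show ¬ (((x, false) : V × Bool)).2 = true by simp)]
        rw [blockProd_false, ← hφ x, ← map_inv]
        rfl
      · rw [if_pos (show (((x, true) : V × Bool)).2 = true from rfl)]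
        rw [blockProd_true, ← hφ x]
        rfl

lemma length_liftSubVerts (v : V) : (liftSubVerts p T v).length ≤ T.card := by
  unfold liftSubVerts
  rw [List.length_pmap]; unfold liftVerts; rw [Finset.length_sort]
  exact Finset.card_filter_le _ _

lemma homWord_length (w : List (V × Bool)) :
    (homWord p T w).length ≤ T.card * w.length := by
  induction w with
  | nil => simp [homWord]
  | cons l w ih =>
    rw [homWord_cons, List.length_append, List.length_cons]
    have hb : (if l.2 then (liftSubVerts p T l.1).map (fun t => (t, true))
       else ((liftSubVerts p T l.1).reverse).map (fun t => (t, false))).length ≤ T.card := by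
      split_ifs <;> simpa using length_liftSubVerts (p := p) (T := T) (v := l.1)
    calc _ ≤ T.card + T.card * w.length := by omega
    _ = T.card * (w.length + 1) := by ring

/-- The count of a chosen lift in the homomorphic word is at least the count of its base. -/
lemma cnt_homWord_ge {x : V} {t₀ : ↥(T : Set V')} (ht₀ : t₀ ∈ liftSubVerts p T x)
    (w : List (V × Bool)) : cnt x w ≤ cnt t₀ (homWord p T w) := by
  induction w with
  | nil => simp [homWord]
  | cons l w ih =>
    rw [homWord_cons, cnt_append, cnt_cons]
    by_cases hlx : l.1 = x
    · have hmem : t₀ ∈ liftSubVerts p T l.1 := by rw [hlx]; exact ht₀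
      have hpos : 1 ≤ cnt t₀ (if l.2 then (liftSubVerts p T l.1).map (fun t => (t, true))
          else ((liftSubVerts p T l.1).reverse).map (fun t => (t, false))) := by
        unfold cnt
        rw [Nat.succ_le_iff, List.countP_pos_iff]
        split_ifs
        · exact ⟨(t₀, true), List.mem_map.mpr ⟨t₀, hmem, rfl⟩, by simp⟩
        · exact ⟨(t₀, false), List.mem_map.mpr ⟨t₀, List.mem_reverse.mpr hmem, rfl⟩, by simp⟩
      rw [if_pos hlx]
      omega
    · rw [if_neg hlx]
      omega

/-- Summing letter counts over the distinct images of an injective family. -/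
lemma sum_cnt_le [Fintype V] {fv : V → ↥(T : Set V')} (hinj : Function.Injective fv)
    (u : List (↥(T : Set V') × Bool)) :
    (∑ x : V, cnt (fv x) u) ≤ u.length := by
  classical
  induction u with
  | nil => simp
  | cons a u ih =>
    have h1 : ∀ x : V, cnt (fv x) (a :: u) ≤ cnt (fv x) u + (if a.1 = fv x then 1 else 0) := by
      intro x
      rw [cnt_cons]
      by_cases h : a.1 = fv x <;> simp [h]
    have h2 : (∑ x : V, if a.1 = fv x then 1 else 0) ≤ 1 := by
      have h3 : (∑ x : V, if a.1 = fv x then 1 else 0) =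
          (Finset.univ.filter (fun x : V => a.1 = fv x)).card := by
        rw [Finset.card_filter]
      rw [h3]
      refine Finset.card_le_one.mpr ?_
      intro b hb c hc
      simp only [Finset.mem_filter] at hb hc
      exact hinj (hb.2.symm.trans hc.2)
    calc (∑ x : V, cnt (fv x) (a :: u))
        ≤ ∑ x : V, (cnt (fv x) u + (if a.1 = fv x then 1 else 0)) :=
          Finset.sum_le_sum fun x _ => h1 x
      _ = (∑ x : V, cnt (fv x) u) + (∑ x : V, if a.1 = fv x then 1 else 0) :=
          Finset.sum_add_distrib
      _ ≤ u.length + 1 := by omega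
      _ = (a :: u).length := by rw [List.length_cons]

lemma sum_cnt_eq [Fintype V] (w : List (V × Bool)) :
    (∑ x : V, cnt x w) = w.length := by
  classical
  induction w with
  | nil => simp
  | cons a w ih =>
    have h1 : ∀ x : V, cnt x (a :: w) = cnt x w + (if a.1 = x then 1 else 0) := by
      intro x
      rw [cnt_cons]
      by_cases h : a.1 = x <;> simp [h]
    have h2 : (∑ x : V, if a.1 = x then 1 else 0) = 1 := by
      rw [Finset.sum_ite_eq Finset.univ a.1 (fun _ => 1)]
      simp
    calc (∑ x : V, cnt x (a :: w))
        = ∑ x : V, (cnt x w + (if a.1 = x then 1 else 0)) :=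
          Finset.sum_congr rfl fun x _ => h1 x
      _ = (∑ x : V, cnt x w) + (∑ x : V, if a.1 = x then 1 else 0) := Finset.sum_add_distrib
      _ = w.length + 1 := by rw [ih, h2]
      _ = (a :: w).length := by rw [List.length_cons]

end App

end RT

/-- Let `p : Γ̃ → Γ` be a universal cover of a finite connected graph with
ordered vertex set, `T` a finite subtree of `Γ̃` and `F ⊆ V(T)` with `p(F) = V(Γ)`.  If
`φ(Γ,T)` is `F`-surviving then `‖w‖ ≤ ‖φ(Γ,T)(w)‖ ≤ |V(T)|·‖w‖` for every `w ∈ G(Γ)`;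
in particular `φ(Γ,T)` is injective and a quasi-isometric group embedding. -/
theorem surviving_implies_qie {V V' : Type} [Fintype V] [DecidableEq V] [LinearOrder V']
    (Γ : SimpleGraph V) (hΓ : Γ.Connected)
    (Γ' : SimpleGraph V') (p : V' → V) (hp : IsUniversalCover Γ' Γ p)
    (T : Finset V') (hT : (Γ'.induce (T : Set V')).IsTree)
    (F : Set V') (hFT : F ⊆ (T : Set V')) (hF : p '' F = Set.univ)
    (φ : Raag Γ →* Raag (Γ'.induce (T : Set V'))) (hφ : IsPhi Γ Γ' p T φ)
    (hsurv : IsSurviving Γ Γ' p T F) :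
    (∀ w : Raag Γ,
      raagNorm Γ w ≤ raagNorm (Γ'.induce (T : Set V')) (φ w) ∧
      raagNorm (Γ'.induce (T : Set V')) (φ w) ≤ T.card * raagNorm Γ w) ∧
    Function.Injective φ ∧
    IsQIEmbedding φ (raagDist Γ) (raagDist (Γ'.induce (T : Set V'))) := by
  classical
  -- choose a section of `p` with values in `F`
  have hsec : ∀ x : V, ∃ y, y ∈ F ∧ p y = x := by
    intro x
    have hx : x ∈ p '' F := by rw [hF]; trivial
    obtain ⟨y, hyF, hyx⟩ := hx
    exact ⟨y, hyF, hyx⟩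
  choose f hfF hfp using hsec
  have hfT : ∀ x : V, f x ∈ (T : Set V') := fun x => hFT (hfF x)
  have hfvinj : Function.Injective (fun x : V => (⟨f x, hfT x⟩ : ↥(T : Set V'))) := by
    intro x y hxy
    have h1 : f x = f y := congrArg Subtype.val hxy
    rw [← hfp x, ← hfp y, h1]
  have hfvmem : ∀ x : V, (⟨f x, hfT x⟩ : ↥(T : Set V')) ∈ liftSubVerts p T x := by
    intro x
    unfold liftSubVerts
    rw [List.mem_pmap]
    refine ⟨f x, ?_, rfl⟩
    unfold liftVerts
    rw [Finset.mem_sort, Finset.mem_filter]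
    exact ⟨Finset.mem_coe.mp (hfT x), hfp x⟩
  have main : ∀ g : Raag Γ,
      raagNorm Γ g ≤ raagNorm (Γ'.induce (T : Set V')) (φ g) ∧
      raagNorm (Γ'.induce (T : Set V')) (φ g) ≤ T.card * raagNorm Γ g := by
    intro g
    obtain ⟨w, hw, hwlen, hwred⟩ := RT.exists_reduced_word Γ g
    constructor
    · obtain ⟨wu, hwu, hwulen, -⟩ := RT.exists_reduced_word (Γ'.induce (T : Set V')) (φ g)
      rw [← hwlen, ← hwulen]
      have hcnt : ∀ x : V, RT.cnt (⟨f x, hfT x⟩ : ↥(T : Set V')) (homWord p T w) ≤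
          RT.cnt (⟨f x, hfT x⟩ : ↥(T : Set V')) wu := by
        intro x
        by_contra hlt
        push_neg at hlt
        have hpeq : wordProd (Γ'.induce (T : Set V')) (homWord p T w) =
            wordProd (Γ'.induce (T : Set V')) wu := by
          rw [RT.homWord_wordProd φ hφ w, hw, hwu]
        exact hsurv w hwred (f x) (hfT x) (hfF x) (RT.cancellation_of_cnt_lt hpeq hlt)
      calc w.length = ∑ x : V, RT.cnt x w := (RT.sum_cnt_eq w).symm
        _ ≤ ∑ x : V, RT.cnt (⟨f x, hfT x⟩ : ↥(T : Set V')) (homWord p T w) :=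
            Finset.sum_le_sum fun x _ => RT.cnt_homWord_ge (hfvmem x) w
        _ ≤ ∑ x : V, RT.cnt (⟨f x, hfT x⟩ : ↥(T : Set V')) wu :=
            Finset.sum_le_sum fun x _ => hcnt x
        _ ≤ wu.length := RT.sum_cnt_le hfvinj wu
    · have h1 : wordProd (Γ'.induce (T : Set V')) (homWord p T w) = φ g := by
        rw [RT.homWord_wordProd φ hφ w, hw]
      calc raagNorm (Γ'.induce (T : Set V')) (φ g) ≤ (homWord p T w).length :=
            RT.raagNorm_le_of_word _ h1
        _ ≤ T.card * w.length := RT.homWord_length w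
        _ = T.card * raagNorm Γ g := by rw [hwlen]
  have hinj : Function.Injective φ := by
    intro a b hab
    have h1 : φ (a * b⁻¹) = 1 := by rw [map_mul, map_inv, hab, mul_inv_cancel]
    have h2 := (main (a * b⁻¹)).1
    rw [h1, RT.raagNorm_one] at h2
    have h3 := RT.eq_one_of_raagNorm_eq_zero (Nat.le_zero.mp h2)
    rw [mul_inv_eq_one] at h3
    exact h3
  refine ⟨main, hinj, hinj, max (T.card : ℝ) 1, le_max_right _ _, ?_⟩
  intro x y
  have hmul : φ y * (φ x)⁻¹ = φ (y * x⁻¹) := by rw [map_mul, map_inv]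
  have hdist : raagDist (Γ'.induce (T : Set V')) (φ x) (φ y) =
      (raagNorm (Γ'.induce (T : Set V')) (φ (y * x⁻¹)) : ℝ) := by
    unfold raagDist wordDist raagNorm
    rw [hmul]
  have hdistG : raagDist Γ x y = (raagNorm Γ (y * x⁻¹) : ℝ) := rfl
  obtain ⟨hl, hr⟩ := main (y * x⁻¹)
  set C : ℝ := max (T.card : ℝ) 1 with hC
  have hC1 : (1 : ℝ) ≤ C := le_max_right _ _
  have hCT : (T.card : ℝ) ≤ C := le_max_left _ _
  have hNnn : (0 : ℝ) ≤ (raagNorm Γ (y * x⁻¹) : ℝ) := Nat.cast_nonneg _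
  have hlR : (raagNorm Γ (y * x⁻¹) : ℝ) ≤
      (raagNorm (Γ'.induce (T : Set V')) (φ (y * x⁻¹)) : ℝ) := Nat.cast_le.mpr hl
  have hrR : (raagNorm (Γ'.induce (T : Set V')) (φ (y * x⁻¹)) : ℝ) ≤
      (T.card : ℝ) * (raagNorm Γ (y * x⁻¹) : ℝ) := by
    have h5 : ((raagNorm (Γ'.induce (T : Set V')) (φ (y * x⁻¹)) : ℕ) : ℝ) ≤
        ((T.card * raagNorm Γ (y * x⁻¹) : ℕ) : ℝ) := Nat.cast_le.mpr hr
    push_cast at h5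
    exact h5
  rw [hdist, hdistG]
  constructor
  · have hdiv : (raagNorm Γ (y * x⁻¹) : ℝ) / C ≤ (raagNorm Γ (y * x⁻¹) : ℝ) :=
      div_le_self hNnn hC1
    have hCpos : (0 : ℝ) ≤ C := le_trans zero_le_one hC1
    linarith
  · have h4 : (T.card : ℝ) * (raagNorm Γ (y * x⁻¹) : ℝ) ≤
        C * (raagNorm Γ (y * x⁻¹) : ℝ) := mul_le_mul_of_nonneg_right hCT hNnn
    have hCpos : (0 : ℝ) ≤ C := le_trans zero_le_one hC1
    linarith
end

section
/- Let Γ₁ and Γ₂ be disjoint finite simple graphs and let T₁, T₂ be finite trees such that for i = 1, 2 there is a quasi-isometric group embedding G(Γ_i) → G(T_i). Let T be the tree obtained from the disjoint union T₁ ⊔ T₂ by adding one new vertex u together with edges joining u to a chosen vertex of T₁ and to a chosen vertex of T₂ (so a vertex of T₁ is joined to a vertex of T₂ by a path of length two). Then G(Γ₁ ⊔ Γ₂) ≅ G(Γ₁) × G(Γ₂), the natural homomorphism G(T₁) × G(T₂) → G(T) is an injective isometric embedding with respect to the word metrics (the product carrying the word metric of the generating set V(T₁) ∪ V(T₂)),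 and consequently there is a quasi-isometric group embedding G(Γ₁ ⊔ Γ₂) → G(T). -/
/-- The tree obtained from the disjoint union `T₁ ⊔ T₂` by adding one new vertex `u` joined by
edges to the vertex `a` of `T₁` and to the vertex `b` of `T₂`. -/
def joinGraph {W₁ W₂ : Type*} (T₁ : SimpleGraph W₁) (T₂ : SimpleGraph W₂) (a : W₁) (b : W₂) :
    SimpleGraph ((W₁ ⊕ W₂) ⊕ Unit) where
  Adj x y :=
    match x, y with
    | .inl (.inl s), .inl (.inl t) => T₁.Adj s t
    | .inl (.inr s), .inl (.inr t) => T₂.Adj s t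
    | .inl (.inl s), .inr _ => s = a
    | .inr _, .inl (.inl t) => t = a
    | .inl (.inr s), .inr _ => s = b
    | .inr _, .inl (.inr t) => t = b
    | _, _ => False
  symm := by
    constructor
    rintro ((s | s) | u) ((t | t) | u') h
    · exact T₁.adj_symm h
    · exact h.elim
    · exact h
    · exact h.elim
    · exact T₂.adj_symm h
    · exact h
    · exact h
    · exact h
    · exact h.elim
  loopless := by
    constructor
    rintro ((s | s) | u) h
    · exact T₁.irrefl h
    · exact T₂.irrefl h
    · exact h.elim

/-! ### Auxiliary machinery -/

section WordLengthAux

variable {G H : Type*} [Group G] [Group H]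

/-- The set of lengths of words representing `g` over `S ∪ S⁻¹`. -/
def genLens (S : Set G) (g : G) : Set ℕ :=
  {n | ∃ l : List G, (∀ x ∈ l, x ∈ S ∨ x⁻¹ ∈ S) ∧ l.prod = g ∧ l.length = n}

lemma wordLength_def (S : Set G) (g : G) : wordLength S g = sInf (genLens S g) := rfl

lemma prod_filter_ne_one (l : List G) [DecidableEq G] :
    (l.filter (fun x => x ≠ 1)).prod = l.prod := by
  induction l with
  | nil => rfl
  | cons a l ih => by_cases h : a = 1 <;> simp [List.filter_cons, h, ← ih]

lemma length_filter_add_length_filter_le {α : Type*} (l : List α) (p q : α → Bool)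
    (h : ∀ x ∈ l, ¬(p x ∧ q x)) :
    (l.filter p).length + (l.filter q).length ≤ l.length := by
  induction l with
  | nil => simp
  | cons a l ih =>
    have ih' := ih (fun x hx => h x (List.mem_cons_of_mem a hx))
    have ha := h a List.mem_cons_self
    by_cases hp : p a <;> by_cases hq : q a <;>
      simp [List.filter_cons, hp, hq] at ha ⊢ <;> omega

lemma genLens_transfer (φ : G →* H) {S : Set G} {T : Set H}
    (hS : ∀ s ∈ S, φ s ∈ T ∨ φ s = 1) {g : G} {n : ℕ} (hn : n ∈ genLens S g) :
    ∃ m ≤ n, m ∈ genLens T (φ g) := by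
  classical
  obtain ⟨l, hl, hprod, hlen⟩ := hn
  refine ⟨((l.map φ).filter (fun x => x ≠ 1)).length, ?_,
    (l.map φ).filter (fun x => x ≠ 1), ?_, ?_, rfl⟩
  · calc ((l.map φ).filter _).length ≤ (l.map φ).length := List.length_filter_le _ _
      _ = n := by rw [List.length_map, hlen]
  · intro x hx
    rw [List.mem_filter] at hx
    obtain ⟨hx1, hx2⟩ := hx
    have hx2 : x ≠ 1 := by simpa using hx2
    obtain ⟨y, hy, rfl⟩ := List.mem_map.mp hx1
    rcases hl y hy with h | h
    · rcases hS y h with h' | h'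
      · exact Or.inl h'
      · exact absurd h' hx2
    · rcases hS y⁻¹ h with h' | h'
      · right; rwa [map_inv] at h'
      · rw [map_inv, inv_eq_one] at h'
        exact absurd h' hx2
  · rw [prod_filter_ne_one, ← map_list_prod, hprod]

lemma sInf_eq_of_transfer {A B : Set ℕ} (hAB : ∀ n ∈ A, ∃ m ≤ n, m ∈ B)
    (hBA : ∀ n ∈ B, ∃ m ≤ n, m ∈ A) : sInf A = sInf B := by
  rcases A.eq_empty_or_nonempty with hA | hA
  · rcases B.eq_empty_or_nonempty with hB | hB
    · rw [hA, hB]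
    · obtain ⟨n, hn⟩ := hB
      obtain ⟨m, _, hm⟩ := hBA n hn
      simp [hA] at hm
  · have hB : B.Nonempty := by
      obtain ⟨n, hn⟩ := hA
      obtain ⟨m, _, hm⟩ := hAB n hn
      exact ⟨m, hm⟩
    apply le_antisymm
    · obtain ⟨m, hm, hmB⟩ := hBA _ (Nat.sInf_mem hB)
      exact le_trans (Nat.sInf_le hmB) hm
    · obtain ⟨m, hm, hmA⟩ := hAB _ (Nat.sInf_mem hA)
      exact le_trans (Nat.sInf_le hmA) hm

/-- Word length is preserved along a homomorphism with a retraction, both of which send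
generators to generators or to `1`. -/
lemma wordLength_eq_of_retract (φ : G →* H) (ψ : H →* G)
    (hψφ : ∀ g, ψ (φ g) = g) {S : Set G} {T : Set H}
    (hS : ∀ s ∈ S, φ s ∈ T ∨ φ s = 1) (hT : ∀ t ∈ T, ψ t ∈ S ∨ ψ t = 1) (g : G) :
    wordLength S g = wordLength T (φ g) := by
  rw [wordLength_def, wordLength_def]
  apply sInf_eq_of_transfer
  · exact fun n hn => genLens_transfer φ hS hn
  · intro n hn
    have := genLens_transfer ψ hT hn
    rwa [hψφ] at this

/-- Splitting the word length over a product of groups. -/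
lemma wordLength_prod_split {S₁ : Set G} {S₂ : Set H} {S' : Set (G × H)}
    (h1 : ∀ x ∈ S', (x.1 ∈ S₁ ∧ x.2 = 1) ∨ (x.1 = 1 ∧ x.2 ∈ S₂))
    (h2 : ∀ s ∈ S₁, ((s, 1) : G × H) ∈ S') (h3 : ∀ t ∈ S₂, ((1, t) : G × H) ∈ S')
    (g : G) (h : H) (hg : (genLens S₁ g).Nonempty) (hh : (genLens S₂ h).Nonempty) :
    wordLength S' (g, h) = wordLength S₁ g + wordLength S₂ h := by
  classical
  rw [wordLength_def, wordLength_def, wordLength_def]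
  have sInf_add_transfer : ∀ {A B₁ B₂ : Set ℕ}, B₁.Nonempty → B₂.Nonempty →
      (∀ m₁ ∈ B₁, ∀ m₂ ∈ B₂, m₁ + m₂ ∈ A) →
      (∀ n ∈ A, ∃ m₁ ∈ B₁, ∃ m₂ ∈ B₂, m₁ + m₂ ≤ n) →
      sInf A = sInf B₁ + sInf B₂ := by
    intro A B₁ B₂ hB₁ hB₂ h1 h2
    have hA : A.Nonempty := ⟨_, h1 _ (Nat.sInf_mem hB₁) _ (Nat.sInf_mem hB₂)⟩
    apply le_antisymm
    · exact Nat.sInf_le (h1 _ (Nat.sInf_mem hB₁) _ (Nat.sInf_mem hB₂))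
    · obtain ⟨m₁, hm₁, m₂, hm₂, hle⟩ := h2 _ (Nat.sInf_mem hA)
      have := Nat.sInf_le hm₁
      have := Nat.sInf_le hm₂
      omega
  apply sInf_add_transfer hg hh
  · rintro m₁ ⟨l₁, hl₁, hp₁, rfl⟩ m₂ ⟨l₂, hl₂, hp₂, rfl⟩
    refine ⟨l₁.map (fun s => (s, 1)) ++ l₂.map (fun t => (1, t)), ?_, ?_, by simp⟩
    · intro x hx
      rcases List.mem_append.mp hx with hx | hx
      · obtain ⟨y, hy, rfl⟩ := List.mem_map.mp hx
        rcases hl₁ y hy with h' | h'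
        · exact Or.inl (h2 y h')
        · exact Or.inr (by simpa [Prod.inv_mk] using h2 _ h')
      · obtain ⟨y, hy, rfl⟩ := List.mem_map.mp hx
        rcases hl₂ y hy with h' | h'
        · exact Or.inl (h3 y h')
        · exact Or.inr (by simpa [Prod.inv_mk] using h3 _ h')
    · have e1 : (l₁.map (fun s => ((s, 1) : G × H))).prod = (g, 1) := by
        rw [show (fun s => ((s, 1) : G × H)) = ⇑(MonoidHom.inl G H) from rfl,
          ← map_list_prod, hp₁]; rfl
      have e2 : (l₂.map (fun t => ((1, t) : G × H))).prod = (1, h) := by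
        rw [show (fun t => ((1, t) : G × H)) = ⇑(MonoidHom.inr G H) from rfl,
          ← map_list_prod, hp₂]; rfl
      rw [List.prod_append, e1, e2, Prod.mk_mul_mk, one_mul, mul_one]
  · rintro n ⟨l, hl, hprod, rfl⟩
    have key : ∀ x ∈ l, x.1 = 1 ∨ x.2 = 1 := by
      intro x hx
      rcases hl x hx with h' | h'
      · rcases h1 x h' with ⟨_, h''⟩ | ⟨h'', _⟩
        · exact Or.inr h''
        · exact Or.inl h''
      · rcases h1 x⁻¹ h' with ⟨_, h''⟩ | ⟨h'', _⟩
        · right; have : x.2⁻¹ = 1 := h''; simpa [inv_eq_one] using this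
        · left; have : x.1⁻¹ = 1 := h''; simpa [inv_eq_one] using this
    refine ⟨((l.map Prod.fst).filter (fun x => x ≠ 1)).length, ?_,
      ((l.map Prod.snd).filter (fun x => x ≠ 1)).length, ?_, ?_⟩
    · refine ⟨(l.map Prod.fst).filter (fun x => x ≠ 1), ?_, ?_, rfl⟩
      · intro x hx
        rw [List.mem_filter] at hx
        obtain ⟨hx1, hx2⟩ := hx
        have hx2 : x ≠ 1 := by simpa using hx2
        obtain ⟨y, hy, rfl⟩ := List.mem_map.mp hx1
        rcases hl y hy with h' | h'
        · rcases h1 y h' with ⟨h'', _⟩ | ⟨h'', _⟩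
          · exact Or.inl h''
          · exact absurd h'' hx2
        · rcases h1 y⁻¹ h' with ⟨h'', _⟩ | ⟨h'', _⟩
          · exact Or.inr h''
          · exact absurd (by simpa [inv_eq_one] using (h'' : y.1⁻¹ = 1)) hx2
      · rw [prod_filter_ne_one]
        rw [show (Prod.fst : G × H → G) = ⇑(MonoidHom.fst G H) from rfl,
          ← map_list_prod, hprod]; rfl
    · refine ⟨(l.map Prod.snd).filter (fun x => x ≠ 1), ?_, ?_, rfl⟩
      · intro x hx
        rw [List.mem_filter] at hx
        obtain ⟨hx1, hx2⟩ := hx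
        have hx2 : x ≠ 1 := by simpa using hx2
        obtain ⟨y, hy, rfl⟩ := List.mem_map.mp hx1
        rcases hl y hy with h' | h'
        · rcases h1 y h' with ⟨_, h''⟩ | ⟨_, h''⟩
          · exact absurd h'' hx2
          · exact Or.inl h''
        · rcases h1 y⁻¹ h' with ⟨_, h''⟩ | ⟨_, h''⟩
          · exact absurd (by simpa [inv_eq_one] using (h'' : y.2⁻¹ = 1)) hx2
          · exact Or.inr h''
      · rw [prod_filter_ne_one]
        rw [show (Prod.snd : G × H → H) = ⇑(MonoidHom.snd G H) from rfl,
          ← map_list_prod, hprod]; rfl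
    · have e1 : ((l.map Prod.fst).filter (fun x => x ≠ 1)).length
          = (l.filter (fun x => x.1 ≠ 1)).length := by
        rw [List.filter_map, List.length_map]; rfl
      have e2 : ((l.map Prod.snd).filter (fun x => x ≠ 1)).length
          = (l.filter (fun x => x.2 ≠ 1)).length := by
        rw [List.filter_map, List.length_map]; rfl
      rw [e1, e2]
      apply length_filter_add_length_filter_le
      intro x hx
      rcases key x hx with h' | h' <;> simp [h']

lemma commute_mk_left_right {x : G} {y : H} : Commute ((x, 1) : G × H) ((1, y) : G × H) := by
  unfold Commute SemiconjBy
  rw [Prod.mk_mul_mk, Prod.mk_mul_mk, one_mul, mul_one, one_mul, mul_one]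

lemma commute_mk_left_left {x y : G} (h : Commute x y) :
    Commute ((x, 1) : G × H) ((y, 1) : G × H) := by
  unfold Commute SemiconjBy
  rw [Prod.mk_mul_mk, Prod.mk_mul_mk, h.eq, one_mul]

lemma commute_mk_right_right {x y : H} (h : Commute x y) :
    Commute ((1, x) : G × H) ((1, y) : G × H) := by
  unfold Commute SemiconjBy
  rw [Prod.mk_mul_mk, Prod.mk_mul_mk, h.eq, one_mul]

lemma prodHom_ext {K : Type*} [Group K] {f g : G × H →* K}
    (h1 : ∀ x, f (x, 1) = g (x, 1)) (h2 : ∀ y, f (1, y) = g (1, y)) : f = g := by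
  ext ⟨x, y⟩
  have hxy : ((x, y) : G × H) = (x, 1) * (1, y) := by
    rw [Prod.mk_mul_mk, mul_one, one_mul]
  rw [hxy, map_mul, map_mul, h1, h2]

end WordLengthAux

section RaagAux

variable {V : Type*} {G : Type*} [Group G]

lemma Raag.commute_of (Γ : SimpleGraph V) {u v : V} (hne : u ≠ v) (hadj : ¬ Γ.Adj u v) :
    Commute (Raag.of Γ u) (Raag.of Γ v) := by
  have h : (QuotientGroup.mk (FreeGroup.of u * FreeGroup.of v * (FreeGroup.of u)⁻¹ *
      (FreeGroup.of v)⁻¹) : Raag Γ) = 1 := by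
    rw [QuotientGroup.eq_one_iff]
    exact Subgroup.subset_normalClosure ⟨u, v, hne, hadj, rfl⟩
  have h2 : Raag.of Γ u * Raag.of Γ v * (Raag.of Γ u)⁻¹ * (Raag.of Γ v)⁻¹ = 1 := h
  have h3 : Raag.of Γ u * Raag.of Γ v * (Raag.of Γ v * Raag.of Γ u)⁻¹ = 1 := by
    rw [mul_inv_rev, ← mul_assoc]; exact h2
  exact mul_inv_eq_one.mp h3

/-- Lift a vertex assignment with commuting images to a homomorphism on the RAAG. -/
def raagLift (Γ : SimpleGraph V) (f : V → G)
    (hf : ∀ u v : V, u ≠ v → ¬ Γ.Adj u v → Commute (f u) (f v)) : Raag Γ →* G :=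
  PresentedGroup.toGroup (f := f) (by
    rintro r ⟨u, v, hne, hadj, rfl⟩
    have hc := (hf u v hne hadj).eq
    simp only [map_mul, map_inv, FreeGroup.lift_apply_of]
    rw [hc]; group)

@[simp] lemma raagLift_of (Γ : SimpleGraph V) (f : V → G)
    (hf : ∀ u v : V, u ≠ v → ¬ Γ.Adj u v → Commute (f u) (f v)) (v : V) :
    raagLift Γ f hf (Raag.of Γ v) = f v :=
  PresentedGroup.toGroup.of _

lemma raag_comm_lift {V₁ V₂ : Type*} {Γ₁ : SimpleGraph V₁} {Γ₂ : SimpleGraph V₂}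
    (φ : Raag Γ₁ →* G) (ψ : Raag Γ₂ →* G)
    (h : ∀ v w, Commute (φ (Raag.of Γ₁ v)) (ψ (Raag.of Γ₂ w))) :
    ∀ m n, Commute (φ m) (ψ n) := by
  have step1 : ∀ (w : V₂) (m : Raag Γ₁), Commute (φ m) (ψ (Raag.of Γ₂ w)) := by
    intro w m
    have := PresentedGroup.generated_by (raagRels Γ₁)
      ((Subgroup.centralizer {ψ (Raag.of Γ₂ w)}).comap φ)
      (fun v => by
        simp only [Subgroup.mem_comap, Subgroup.mem_centralizer_iff, Set.mem_singleton_iff]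
        rintro x rfl
        exact (h v w).symm.eq) m
    simp only [Subgroup.mem_comap, Subgroup.mem_centralizer_iff, Set.mem_singleton_iff] at this
    exact Commute.symm (this _ rfl)
  intro m n
  have := PresentedGroup.generated_by (raagRels Γ₂)
    ((Subgroup.centralizer {φ m}).comap ψ)
    (fun w => by
      simp only [Subgroup.mem_comap, Subgroup.mem_centralizer_iff, Set.mem_singleton_iff]
      rintro x rfl
      exact (step1 w m).eq) n
  simp only [Subgroup.mem_comap, Subgroup.mem_centralizer_iff, Set.mem_singleton_iff] at this
  exact this _ rfl

/-- Every element of a RAAG is a product of generators and inverses. -/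
lemma raag_exists_word (Γ : SimpleGraph V) (g : Raag Γ) :
    ∃ l : List (Raag Γ),
      (∀ x ∈ l, x ∈ Set.range (Raag.of Γ) ∨ x⁻¹ ∈ Set.range (Raag.of Γ)) ∧ l.prod = g := by
  have hg : g ∈ Subgroup.closure (Set.range (Raag.of Γ)) := by
    rw [PresentedGroup.closure_range_of]; trivial
  refine Subgroup.closure_induction ?_ ?_ ?_ ?_ hg
  · intro x hx
    exact ⟨[x], by simpa using Or.inl hx, by simp⟩
  · exact ⟨[], by simp, by simp⟩
  · rintro x y _ _ ⟨l₁, hl₁, rfl⟩ ⟨l₂, hl₂, rfl⟩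
    exact ⟨l₁ ++ l₂, by
      intro z hz
      rcases List.mem_append.mp hz with hz | hz
      exacts [hl₁ z hz, hl₂ z hz], by simp⟩
  · rintro x _ ⟨l, hl, rfl⟩
    refine ⟨(l.map (·⁻¹)).reverse, ?_, (List.prod_inv_reverse l).symm⟩
    intro z hz
    rw [List.mem_reverse] at hz
    obtain ⟨y, hy, rfl⟩ := List.mem_map.mp hz
    rcases hl y hy with h' | h'
    · exact Or.inr (by simpa using h')
    · exact Or.inl h'

lemma raag_genLens_nonempty (Γ : SimpleGraph V) (g : Raag Γ) :
    (genLens (Set.range (Raag.of Γ)) g).Nonempty := by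
  obtain ⟨l, hl, hp⟩ := raag_exists_word Γ g
  exact ⟨l.length, l, hl, hp, rfl⟩

end RaagAux

section SumEquiv

variable {V₁ V₂ : Type*} (Γ₁ : SimpleGraph V₁) (Γ₂ : SimpleGraph V₂)

/-- The homomorphism `G(Γ₁ ⊔ Γ₂) → G(Γ₁) × G(Γ₂)`. -/
def raagSumToProd : Raag (Γ₁ ⊕g Γ₂) →* Raag Γ₁ × Raag Γ₂ :=
  raagLift _ (Sum.elim (fun v => (Raag.of Γ₁ v, 1)) (fun v => (1, Raag.of Γ₂ v))) (by
    rintro (u | u) (v | v) hne hadj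
    · exact commute_mk_left_left
        (Raag.commute_of Γ₁ (fun h => hne (by rw [h])) (fun h => hadj h))
    · exact commute_mk_left_right
    · exact commute_mk_left_right.symm
    · exact commute_mk_right_right
        (Raag.commute_of Γ₂ (fun h => hne (by rw [h])) (fun h => hadj h)))

@[simp] lemma raagSumToProd_inl (v : V₁) :
    raagSumToProd Γ₁ Γ₂ (Raag.of (Γ₁ ⊕g Γ₂) (Sum.inl v)) = (Raag.of Γ₁ v, 1) :=
  raagLift_of _ _ _ _

@[simp] lemma raagSumToProd_inr (v : V₂) :
    raagSumToProd Γ₁ Γ₂ (Raag.of (Γ₁ ⊕g Γ₂) (Sum.inr v)) = (1, Raag.of Γ₂ v) :=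
  raagLift_of _ _ _ _

/-- The left factor inclusion `G(Γ₁) → G(Γ₁ ⊔ Γ₂)`. -/
def raagInl : Raag Γ₁ →* Raag (Γ₁ ⊕g Γ₂) :=
  raagLift Γ₁ (fun v => Raag.of (Γ₁ ⊕g Γ₂) (Sum.inl v))
    (fun u v hne hadj => Raag.commute_of _ (fun h => hne (Sum.inl_injective h))
      (fun h => hadj h))

/-- The right factor inclusion `G(Γ₂) → G(Γ₁ ⊔ Γ₂)`. -/
def raagInr : Raag Γ₂ →* Raag (Γ₁ ⊕g Γ₂) :=
  raagLift Γ₂ (fun v => Raag.of (Γ₁ ⊕g Γ₂) (Sum.inr v))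
    (fun u v hne hadj => Raag.commute_of _ (fun h => hne (Sum.inr_injective h))
      (fun h => hadj h))

/-- The homomorphism `G(Γ₁) × G(Γ₂) → G(Γ₁ ⊔ Γ₂)`. -/
def raagProdToSum : Raag Γ₁ × Raag Γ₂ →* Raag (Γ₁ ⊕g Γ₂) :=
  MonoidHom.noncommCoprod (raagInl Γ₁ Γ₂) (raagInr Γ₁ Γ₂)
    (raag_comm_lift _ _ (fun v w => by
      simp only [raagInl, raagInr, raagLift_of]
      exact Raag.commute_of _ (fun h => Sum.inl_ne_inr h) (by simp)))

lemma raagProdToSum_mk (x : Raag Γ₁) (y : Raag Γ₂) :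
    raagProdToSum Γ₁ Γ₂ (x, y) = raagInl Γ₁ Γ₂ x * raagInr Γ₁ Γ₂ y := rfl

/-- `G(Γ₁ ⊔ Γ₂) ≅ G(Γ₁) × G(Γ₂)`. -/
def raagSumEquivProd : Raag (Γ₁ ⊕g Γ₂) ≃* Raag Γ₁ × Raag Γ₂ :=
  MonoidHom.toMulEquiv (raagSumToProd Γ₁ Γ₂) (raagProdToSum Γ₁ Γ₂)
    (by
      apply PresentedGroup.ext
      rintro (v | v) <;>
        simp [raagProdToSum_mk, raagSumToProd_inl, raagSumToProd_inr, raagInl, raagInr,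
          map_one])
    (by
      apply prodHom_ext
      · intro x
        have : ∀ x, raagSumToProd Γ₁ Γ₂ (raagProdToSum Γ₁ Γ₂ (x, 1))
            = (MonoidHom.inl (Raag Γ₁) (Raag Γ₂)) x := by
          intro x
          rw [show ((x, 1) : Raag Γ₁ × Raag Γ₂) = MonoidHom.inl (Raag Γ₁) (Raag Γ₂) x from rfl,
            ← MonoidHom.comp_apply, ← MonoidHom.comp_apply]
          refine DFunLike.congr_fun (PresentedGroup.ext fun v => ?_) x
          simp [raagProdToSum_mk, raagInl, raagInr, map_one]
        simpa using this x
      · intro y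
        have : ∀ y, raagSumToProd Γ₁ Γ₂ (raagProdToSum Γ₁ Γ₂ (1, y))
            = (MonoidHom.inr (Raag Γ₁) (Raag Γ₂)) y := by
          intro y
          rw [show ((1, y) : Raag Γ₁ × Raag Γ₂) = MonoidHom.inr (Raag Γ₁) (Raag Γ₂) y from rfl,
            ← MonoidHom.comp_apply, ← MonoidHom.comp_apply]
          refine DFunLike.congr_fun (PresentedGroup.ext fun v => ?_) y
          simp [raagProdToSum_mk, raagInl, raagInr, map_one]
        simpa using this y)

@[simp] lemma raagSumEquivProd_inl (v : V₁) :
    raagSumEquivProd Γ₁ Γ₂ (Raag.of (Γ₁ ⊕g Γ₂) (Sum.inl v)) = (Raag.of Γ₁ v, 1) :=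
  raagSumToProd_inl Γ₁ Γ₂ v

@[simp] lemma raagSumEquivProd_inr (v : V₂) :
    raagSumEquivProd Γ₁ Γ₂ (Raag.of (Γ₁ ⊕g Γ₂) (Sum.inr v)) = (1, Raag.of Γ₂ v) :=
  raagSumToProd_inr Γ₁ Γ₂ v

lemma raagSumEquivProd_symm_apply (x : Raag Γ₁ × Raag Γ₂) :
    (raagSumEquivProd Γ₁ Γ₂).symm x = raagProdToSum Γ₁ Γ₂ x := rfl

end SumEquiv

namespace JoinAux

variable {W₁ W₂ : Type*} (T₁ : SimpleGraph W₁) (T₂ : SimpleGraph W₂) (a : W₁) (b : W₂)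

/-- The embedding of `T₁` into the join graph. -/
def embL : T₁ →g joinGraph T₁ T₂ a b where
  toFun s := Sum.inl (Sum.inl s)
  map_rel' := fun h => h

/-- The embedding of `T₂` into the join graph. -/
def embR : T₂ →g joinGraph T₁ T₂ a b where
  toFun t := Sum.inl (Sum.inr t)
  map_rel' := fun h => h

variable {T₁ T₂ a b}

lemma walk_left {x y : (W₁ ⊕ W₂) ⊕ Unit} (p : (joinGraph T₁ T₂ a b).Walk x y) :
    ∀ (s : W₁) (hx : x = Sum.inl (Sum.inl s)), (Sum.inr () ∉ p.support) →
    ∃ (t : W₁) (hy : y = Sum.inl (Sum.inl t)) (q : T₁.Walk s t),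
      p = (q.map (embL T₁ T₂ a b)).copy hx.symm hy.symm := by
  induction p with
  | nil =>
    rintro s rfl _
    exact ⟨s, rfl, SimpleGraph.Walk.nil, rfl⟩
  | @cons x z y h p ih =>
    rintro s rfl hu
    rw [SimpleGraph.Walk.support_cons, List.mem_cons] at hu
    push_neg at hu
    obtain ⟨-, hu⟩ := hu
    match z, h with
    | Sum.inl (Sum.inl s'), h =>
      obtain ⟨t, hy, q, hq⟩ := ih s' rfl hu
      refine ⟨t, hy, SimpleGraph.Walk.cons (show T₁.Adj s s' from h) q, ?_⟩
      subst hy; subst hq; rfl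
    | Sum.inr u', h =>
      exact absurd (by simpa using p.start_mem_support) (by simpa using hu)

lemma walk_right {x y : (W₁ ⊕ W₂) ⊕ Unit} (p : (joinGraph T₁ T₂ a b).Walk x y) :
    ∀ (s : W₂) (hx : x = Sum.inl (Sum.inr s)), (Sum.inr () ∉ p.support) →
    ∃ (t : W₂) (hy : y = Sum.inl (Sum.inr t)) (q : T₂.Walk s t),
      p = (q.map (embR T₁ T₂ a b)).copy hx.symm hy.symm := by
  induction p with
  | nil =>
    rintro s rfl _
    exact ⟨s, rfl, SimpleGraph.Walk.nil, rfl⟩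
  | @cons x z y h p ih =>
    rintro s rfl hu
    rw [SimpleGraph.Walk.support_cons, List.mem_cons] at hu
    push_neg at hu
    obtain ⟨-, hu⟩ := hu
    match z, h with
    | Sum.inl (Sum.inr s'), h =>
      obtain ⟨t, hy, q, hq⟩ := ih s' rfl hu
      refine ⟨t, hy, SimpleGraph.Walk.cons (show T₂.Adj s s' from h) q, ?_⟩
      subst hy; subst hq; rfl
    | Sum.inr u', h =>
      exact absurd (by simpa using p.start_mem_support) (by simpa using hu)

lemma no_cycle_at_u (hT₁ : T₁.IsTree) (hT₂ : T₂.IsTree)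
    (c : (joinGraph T₁ T₂ a b).Walk (Sum.inr ()) (Sum.inr ())) (hc : c.IsCycle) : False := by
  cases c with
  | nil => exact hc.ne_nil rfl
  | @cons _ z _ h p =>
    rw [SimpleGraph.Walk.cons_isCycle_iff] at hc
    obtain ⟨hp, he⟩ := hc
    have hpr := hp.reverse
    cases hrev : p.reverse with
    | nil => exact h
    | @cons _ z₂ _ h₂ p₂ =>
      rw [hrev, SimpleGraph.Walk.cons_isPath_iff] at hpr
      obtain ⟨hp₂, hU₂⟩ := hpr
      have hedge : s(Sum.inr (), z₂) ∈ p.edges := by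
        have : s(Sum.inr (), z₂) ∈ p.reverse.edges := by
          rw [hrev, SimpleGraph.Walk.edges_cons]
          exact List.mem_cons_self
        rwa [SimpleGraph.Walk.edges_reverse, List.mem_reverse] at this
      rcases z with ((t | t) | u) <;> rcases z₂ with ((t₂ | t₂) | u₂)
      · have ht : t = a := h
        have ht₂ : t₂ = a := h₂
        rw [ht₂.trans ht.symm] at hedge
        exact he hedge
      · obtain ⟨t', hy, q, hq⟩ := walk_right p₂ t₂ rfl hU₂
        simp at hy
      · exact h₂
      · obtain ⟨t', hy, q, hq⟩ := walk_left p₂ t₂ rfl hU₂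
        simp at hy
      · have ht : t = b := h
        have ht₂ : t₂ = b := h₂
        rw [ht₂.trans ht.symm] at hedge
        exact he hedge
      · exact h₂
      · exact h
      · exact h
      · exact h

lemma embL_injective : Function.Injective (embL T₁ T₂ a b) :=
  fun x y h => Sum.inl_injective (Sum.inl_injective h)

lemma embR_injective : Function.Injective (embR T₁ T₂ a b) :=
  fun x y h => Sum.inr_injective (Sum.inl_injective h)

lemma join_isTree (hT₁ : T₁.IsTree) (hT₂ : T₂.IsTree) :
    (joinGraph T₁ T₂ a b).IsTree := by
  constructor
  · -- connected
    have hreach : ∀ x, (joinGraph T₁ T₂ a b).Reachable x (Sum.inr ()) := by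
      rintro ((s | t) | u)
      · have h1 : T₁.Reachable s a := hT₁.isConnected.preconnected s a
        exact (h1.map (embL T₁ T₂ a b)).trans
          (SimpleGraph.Adj.reachable (show (joinGraph T₁ T₂ a b).Adj
            (Sum.inl (Sum.inl a)) (Sum.inr ()) from rfl))
      · have h1 : T₂.Reachable t b := hT₂.isConnected.preconnected t b
        exact (h1.map (embR T₁ T₂ a b)).trans
          (SimpleGraph.Adj.reachable (show (joinGraph T₁ T₂ a b).Adj
            (Sum.inl (Sum.inr b)) (Sum.inr ()) from rfl))
      · exact SimpleGraph.Reachable.refl _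
    exact ⟨fun x y => (hreach x).trans (hreach y).symm⟩
  · -- acyclic
    classical
    intro v c hc
    rcases Classical.em ((Sum.inr () : (W₁ ⊕ W₂) ⊕ Unit) ∈ c.support) with hU | hU
    · exact no_cycle_at_u hT₁ hT₂ (c.rotate _ hU) (hc.rotate hU)
    · match v, c, hc, hU with
      | Sum.inl (Sum.inl s), c, hc, hU =>
        obtain ⟨t, hy, q, hq⟩ := walk_left c s rfl hU
        have hs' : s = t := by simpa using hy
        subst hs'
        rw [hq] at hc
        exact hT₁.IsAcyclic q
          ((SimpleGraph.Walk.map_isCycle_iff_of_injective embL_injective).mp hc)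
      | Sum.inl (Sum.inr s), c, hc, hU =>
        obtain ⟨t, hy, q, hq⟩ := walk_right c s rfl hU
        have hs' : s = t := by simpa using hy
        subst hs'
        rw [hq] at hc
        exact hT₂.IsAcyclic q
          ((SimpleGraph.Walk.map_isCycle_iff_of_injective embR_injective).mp hc)
      | Sum.inr u, c, hc, hU =>
        exact hU c.start_mem_support

end JoinAux


section JoinHoms

variable {W₁ W₂ : Type*} (T₁ : SimpleGraph W₁) (T₂ : SimpleGraph W₂) (a : W₁) (b : W₂)

/-- `G(T₁) → G(T)`. -/
def joinInl : Raag T₁ →* Raag (joinGraph T₁ T₂ a b) :=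
  raagLift T₁ (fun s => Raag.of (joinGraph T₁ T₂ a b) (Sum.inl (Sum.inl s)))
    (fun u v hne hadj => Raag.commute_of _
      (fun h => hne (Sum.inl_injective (Sum.inl_injective h))) (fun h => hadj h))

/-- `G(T₂) → G(T)`. -/
def joinInr : Raag T₂ →* Raag (joinGraph T₁ T₂ a b) :=
  raagLift T₂ (fun t => Raag.of (joinGraph T₁ T₂ a b) (Sum.inl (Sum.inr t)))
    (fun u v hne hadj => Raag.commute_of _
      (fun h => hne (Sum.inr_injective (Sum.inl_injective h))) (fun h => hadj h))

/-- The natural homomorphism `G(T₁) × G(T₂) → G(T)`. -/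
def joinHom : Raag T₁ × Raag T₂ →* Raag (joinGraph T₁ T₂ a b) :=
  MonoidHom.noncommCoprod (joinInl T₁ T₂ a b) (joinInr T₁ T₂ a b)
    (raag_comm_lift _ _ (fun v w => by
      simp only [joinInl, joinInr, raagLift_of]
      exact Raag.commute_of _ (fun h => by simp at h) (fun h => h)))

lemma joinHom_mk (x : Raag T₁) (y : Raag T₂) :
    joinHom T₁ T₂ a b (x, y) = joinInl T₁ T₂ a b x * joinInr T₁ T₂ a b y := rfl

@[simp] lemma joinHom_left (x : Raag T₁) :
    joinHom T₁ T₂ a b (x, 1) = joinInl T₁ T₂ a b x := by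
  rw [joinHom_mk, map_one, mul_one]

@[simp] lemma joinHom_right (y : Raag T₂) :
    joinHom T₁ T₂ a b (1, y) = joinInr T₁ T₂ a b y := by
  rw [joinHom_mk, map_one, one_mul]

/-- The retraction `G(T) → G(T₁) × G(T₂)` killing the extra vertex. -/
def joinRetract : Raag (joinGraph T₁ T₂ a b) →* Raag T₁ × Raag T₂ :=
  raagLift _ (fun x => match x with
    | Sum.inl (Sum.inl s) => (Raag.of T₁ s, 1)
    | Sum.inl (Sum.inr t) => (1, Raag.of T₂ t)
    | Sum.inr _ => 1) (by
    rintro ((s | s) | u) ((t | t) | u') hne hadj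
    · exact commute_mk_left_left (Raag.commute_of T₁
        (fun h => hne (by rw [h])) (fun h => hadj h))
    · exact commute_mk_left_right
    · exact Commute.one_right _
    · exact commute_mk_left_right.symm
    · exact commute_mk_right_right (Raag.commute_of T₂
        (fun h => hne (by rw [h])) (fun h => hadj h))
    · exact Commute.one_right _
    · exact Commute.one_left _
    · exact Commute.one_left _
    · exact Commute.one_left _)

@[simp] lemma joinRetract_of_L (s : W₁) :
    joinRetract T₁ T₂ a b (Raag.of _ (Sum.inl (Sum.inl s))) = (Raag.of T₁ s, 1) :=
  raagLift_of _ _ _ _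

@[simp] lemma joinRetract_of_R (t : W₂) :
    joinRetract T₁ T₂ a b (Raag.of _ (Sum.inl (Sum.inr t))) = (1, Raag.of T₂ t) :=
  raagLift_of _ _ _ _

@[simp] lemma joinRetract_of_U (u : Unit) :
    joinRetract T₁ T₂ a b (Raag.of _ (Sum.inr u)) = 1 :=
  raagLift_of _ _ _ _

lemma joinRetract_joinHom (p : Raag T₁ × Raag T₂) :
    joinRetract T₁ T₂ a b (joinHom T₁ T₂ a b p) = p := by
  obtain ⟨x, y⟩ := p
  have e1 : (joinRetract T₁ T₂ a b).comp (joinInl T₁ T₂ a b)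
      = MonoidHom.inl (Raag T₁) (Raag T₂) :=
    PresentedGroup.ext fun s => by simp [joinInl]
  have e2 : (joinRetract T₁ T₂ a b).comp (joinInr T₁ T₂ a b)
      = MonoidHom.inr (Raag T₁) (Raag T₂) :=
    PresentedGroup.ext fun t => by simp [joinInr]
  rw [joinHom_mk, map_mul, ← MonoidHom.comp_apply, ← MonoidHom.comp_apply, e1, e2]
  rw [MonoidHom.inl_apply, MonoidHom.inr_apply, Prod.mk_mul_mk, mul_one, one_mul]

lemma joinHom_injective : Function.Injective (joinHom T₁ T₂ a b) :=
  Function.LeftInverse.injective (joinRetract_joinHom T₁ T₂ a b)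

/-- The generating set of the product group. -/
def prodGenSet : Set (Raag T₁ × Raag T₂) :=
  (Set.range fun s : W₁ => ((Raag.of T₁ s, 1) : Raag T₁ × Raag T₂)) ∪
    (Set.range fun t : W₂ => ((1, Raag.of T₂ t) : Raag T₁ × Raag T₂))

lemma joinHom_wordLength (z : Raag T₁ × Raag T₂) :
    wordLength (prodGenSet T₁ T₂) z
      = wordLength (Set.range (Raag.of (joinGraph T₁ T₂ a b))) (joinHom T₁ T₂ a b z) := by
  apply wordLength_eq_of_retract (joinHom T₁ T₂ a b) (joinRetract T₁ T₂ a b)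
    (joinRetract_joinHom T₁ T₂ a b)
  · rintro x (⟨s, rfl⟩ | ⟨t, rfl⟩)
    · exact Or.inl ⟨Sum.inl (Sum.inl s), by simp [joinInl]⟩
    · exact Or.inl ⟨Sum.inl (Sum.inr t), by simp [joinInr]⟩
  · rintro x ⟨v, rfl⟩
    match v with
    | Sum.inl (Sum.inl s) => exact Or.inl (Or.inl ⟨s, by simp⟩)
    | Sum.inl (Sum.inr t) => exact Or.inl (Or.inr ⟨t, by simp⟩)
    | Sum.inr u => exact Or.inr (by simp)

lemma prodGenSet_split (g : Raag T₁) (h : Raag T₂) :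
    wordLength (prodGenSet T₁ T₂) (g, h)
      = wordLength (Set.range (Raag.of T₁)) g + wordLength (Set.range (Raag.of T₂)) h := by
  apply wordLength_prod_split
  · rintro x (⟨s, rfl⟩ | ⟨t, rfl⟩)
    · exact Or.inl ⟨⟨s, rfl⟩, rfl⟩
    · exact Or.inr ⟨rfl, ⟨t, rfl⟩⟩
  · rintro s ⟨v, rfl⟩
    exact Or.inl ⟨v, rfl⟩
  · rintro t ⟨v, rfl⟩
    exact Or.inr ⟨v, rfl⟩
  · exact raag_genLens_nonempty T₁ g
  · exact raag_genLens_nonempty T₂ h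

end JoinHoms

section SumIso

variable {V₁ V₂ : Type*} (Γ₁ : SimpleGraph V₁) (Γ₂ : SimpleGraph V₂)

lemma sumEquiv_wordLength (z : Raag (Γ₁ ⊕g Γ₂)) :
    wordLength (Set.range (Raag.of (Γ₁ ⊕g Γ₂))) z
      = wordLength (prodGenSet Γ₁ Γ₂) (raagSumEquivProd Γ₁ Γ₂ z) := by
  apply wordLength_eq_of_retract (raagSumEquivProd Γ₁ Γ₂).toMonoidHom
    (raagSumEquivProd Γ₁ Γ₂).symm.toMonoidHom (raagSumEquivProd Γ₁ Γ₂).symm_apply_apply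
  · rintro x ⟨v, rfl⟩
    match v with
    | Sum.inl v => exact Or.inl (Or.inl ⟨v, by simp⟩)
    | Sum.inr v => exact Or.inl (Or.inr ⟨v, by simp⟩)
  · rintro x (⟨s, rfl⟩ | ⟨t, rfl⟩)
    · refine Or.inl ⟨Sum.inl s, ?_⟩
      rw [MulEquiv.coe_toMonoidHom, raagSumEquivProd_symm_apply, raagProdToSum_mk,
        map_one, mul_one, raagInl, raagLift_of]
    · refine Or.inl ⟨Sum.inr t, ?_⟩
      rw [MulEquiv.coe_toMonoidHom, raagSumEquivProd_symm_apply, raagProdToSum_mk,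
        map_one, one_mul, raagInr, raagLift_of]

end SumIso

/-- Let `Γ₁, Γ₂` be disjoint finite simple graphs, `T₁, T₂` finite trees with
quasi-isometric group embeddings `G(Γᵢ) → G(Tᵢ)`, and let `T` be the tree obtained from
`T₁ ⊔ T₂` by joining a new vertex `u` to a vertex `a` of `T₁` and a vertex `b` of `T₂`.
Then `G(Γ₁ ⊔ Γ₂) ≅ G(Γ₁) × G(Γ₂)`; `T` is a tree; the natural homomorphism
`G(T₁) × G(T₂) → G(T)` is an injective isometric embedding (the product carrying the word
metric of the generating set `V(T₁) ∪ V(T₂)`); and consequently there is a quasi-isometric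
group embedding `G(Γ₁ ⊔ Γ₂) → G(T)`. -/
theorem qie_of_disjoint_union {V₁ V₂ W₁ W₂ : Type}
    [Fintype V₁] [Fintype V₂] [Fintype W₁] [Fintype W₂]
    (Γ₁ : SimpleGraph V₁) (Γ₂ : SimpleGraph V₂)
    (T₁ : SimpleGraph W₁) (T₂ : SimpleGraph W₂)
    (hT₁ : T₁.IsTree) (hT₂ : T₂.IsTree) (a : W₁) (b : W₂)
    (f₁ : Raag Γ₁ →* Raag T₁) (hf₁ : IsQIEmbedding f₁ (raagDist Γ₁) (raagDist T₁))
    (f₂ : Raag Γ₂ →* Raag T₂) (hf₂ : IsQIEmbedding f₂ (raagDist Γ₂) (raagDist T₂)) :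
    -- G(Γ₁ ⊔ Γ₂) ≅ G(Γ₁) × G(Γ₂), compatibly with the vertex generators
    (∃ e : Raag (Γ₁ ⊕g Γ₂) ≃* Raag Γ₁ × Raag Γ₂,
      (∀ v : V₁, e (Raag.of (Γ₁ ⊕g Γ₂) (Sum.inl v)) = (Raag.of Γ₁ v, 1)) ∧
      (∀ v : V₂, e (Raag.of (Γ₁ ⊕g Γ₂) (Sum.inr v)) = (1, Raag.of Γ₂ v))) ∧
    -- T is a tree
    (joinGraph T₁ T₂ a b).IsTree ∧
    -- the natural homomorphism G(T₁) × G(T₂) → G(T) is an injective isometric embedding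
    (∃ j : Raag T₁ × Raag T₂ →* Raag (joinGraph T₁ T₂ a b),
      (∀ s : W₁, j (Raag.of T₁ s, 1) = Raag.of (joinGraph T₁ T₂ a b) (Sum.inl (Sum.inl s))) ∧
      (∀ t : W₂, j (1, Raag.of T₂ t) = Raag.of (joinGraph T₁ T₂ a b) (Sum.inl (Sum.inr t))) ∧
      Function.Injective j ∧
      (∀ x y : Raag T₁ × Raag T₂,
        wordDist ((Set.range fun s : W₁ => ((Raag.of T₁ s, 1) : Raag T₁ × Raag T₂)) ∪
            (Set.range fun t : W₂ => ((1, Raag.of T₂ t) : Raag T₁ × Raag T₂))) x y =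
          raagDist (joinGraph T₁ T₂ a b) (j x) (j y))) ∧
    -- consequently, G(Γ₁ ⊔ Γ₂) quasi-isometrically embeds into G(T)
    (∃ F : Raag (Γ₁ ⊕g Γ₂) →* Raag (joinGraph T₁ T₂ a b),
      IsQIEmbedding F (raagDist (Γ₁ ⊕g Γ₂)) (raagDist (joinGraph T₁ T₂ a b))) := by
  refine ⟨⟨raagSumEquivProd Γ₁ Γ₂, fun v => raagSumEquivProd_inl Γ₁ Γ₂ v,
      fun v => raagSumEquivProd_inr Γ₁ Γ₂ v⟩,
    JoinAux.join_isTree hT₁ hT₂,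
    ⟨joinHom T₁ T₂ a b, fun s => by simp [joinInl], fun t => by simp [joinInr],
      joinHom_injective T₁ T₂ a b, fun x y => ?_⟩, ?_⟩
  · show (wordLength (prodGenSet T₁ T₂) (y * x⁻¹) : ℝ) = _
    rw [joinHom_wordLength T₁ T₂ a b (y * x⁻¹),
      show joinHom T₁ T₂ a b (y * x⁻¹)
        = joinHom T₁ T₂ a b y * (joinHom T₁ T₂ a b x)⁻¹ by rw [map_mul, map_inv]]
    rfl
  · obtain ⟨hinj₁, C₁, hC₁, hb₁⟩ := hf₁
    obtain ⟨hinj₂, C₂, hC₂, hb₂⟩ := hf₂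
    set F : Raag (Γ₁ ⊕g Γ₂) →* Raag (joinGraph T₁ T₂ a b) :=
      (joinHom T₁ T₂ a b).comp ((f₁.prodMap f₂).comp
        (raagSumEquivProd Γ₁ Γ₂).toMonoidHom) with hF
    have hFapp : ∀ z, F z = joinHom T₁ T₂ a b
        (f₁ ((raagSumEquivProd Γ₁ Γ₂) z).1, f₂ ((raagSumEquivProd Γ₁ Γ₂) z).2) := by
      intro z
      rw [hF]
      simp only [MonoidHom.coe_comp, Function.comp_apply, MulEquiv.coe_toMonoidHom]
      rfl
    refine ⟨F, ?_, C₁ + C₂, by linarith, fun x y => ?_⟩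
    · -- injectivity
      have h2 : Function.Injective ⇑(f₁.prodMap f₂) := by
        rw [MonoidHom.coe_prodMap]
        exact hinj₁.prodMap hinj₂
      rw [hF, MonoidHom.coe_comp, MonoidHom.coe_comp]
      exact (joinHom_injective T₁ T₂ a b).comp
        (h2.comp (raagSumEquivProd Γ₁ Γ₂).injective)
    · -- the QI inequalities
      set z := y * x⁻¹ with hz
      set g₁ := ((raagSumEquivProd Γ₁ Γ₂) z).1 with hg₁
      set g₂ := ((raagSumEquivProd Γ₁ Γ₂) z).2 with hg₂
      have hzdist : raagDist (Γ₁ ⊕g Γ₂) x y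
          = (raagNorm Γ₁ g₁ : ℝ) + (raagNorm Γ₂ g₂ : ℝ) := by
        show ((wordLength (Set.range (Raag.of (Γ₁ ⊕g Γ₂))) z : ℕ) : ℝ) = _
        rw [sumEquiv_wordLength Γ₁ Γ₂ z,
          show (raagSumEquivProd Γ₁ Γ₂) z = (g₁, g₂) from rfl, prodGenSet_split]
        push_cast
        rfl
      have hFdist : raagDist (joinGraph T₁ T₂ a b) (F x) (F y)
          = (raagNorm T₁ (f₁ g₁) : ℝ) + (raagNorm T₂ (f₂ g₂) : ℝ) := by
        show ((wordLength (Set.range (Raag.of (joinGraph T₁ T₂ a b)))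
          (F y * (F x)⁻¹) : ℕ) : ℝ) = _
        rw [show F y * (F x)⁻¹ = F z by rw [hz, map_mul, map_inv], hFapp z,
          ← joinHom_wordLength, prodGenSet_split]
        push_cast
        rfl
      have e₁ : raagDist Γ₁ 1 g₁ = (raagNorm Γ₁ g₁ : ℝ) := by
        show ((wordLength (Set.range (Raag.of Γ₁)) (g₁ * 1⁻¹) : ℕ) : ℝ) = _
        rw [inv_one, mul_one]
        rfl
      have e₂ : raagDist Γ₂ 1 g₂ = (raagNorm Γ₂ g₂ : ℝ) := by
        show ((wordLength (Set.range (Raag.of Γ₂)) (g₂ * 1⁻¹) : ℕ) : ℝ) = _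
        rw [inv_one, mul_one]
        rfl
      have d₁ : raagDist T₁ (f₁ 1) (f₁ g₁) = (raagNorm T₁ (f₁ g₁) : ℝ) := by
        show ((wordLength (Set.range (Raag.of T₁)) (f₁ g₁ * (f₁ 1)⁻¹) : ℕ) : ℝ) = _
        rw [map_one, inv_one, mul_one]
        rfl
      have d₂ : raagDist T₂ (f₂ 1) (f₂ g₂) = (raagNorm T₂ (f₂ g₂) : ℝ) := by
        show ((wordLength (Set.range (Raag.of T₂)) (f₂ g₂ * (f₂ 1)⁻¹) : ℕ) : ℝ) = _
        rw [map_one, inv_one, mul_one]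
        rfl
      have hb₁' := hb₁ 1 g₁
      have hb₂' := hb₂ 1 g₂
      rw [e₁, d₁] at hb₁'
      rw [e₂, d₂] at hb₂'
      obtain ⟨hlo₁, hhi₁⟩ := hb₁'
      obtain ⟨hlo₂, hhi₂⟩ := hb₂'
      rw [hzdist, hFdist]
      set N₁ := (raagNorm Γ₁ g₁ : ℝ)
      set N₂ := (raagNorm Γ₂ g₂ : ℝ)
      set D₁ := (raagNorm T₁ (f₁ g₁) : ℝ)
      set D₂ := (raagNorm T₂ (f₂ g₂) : ℝ)
      have hN₁ : 0 ≤ N₁ := Nat.cast_nonneg _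
      have hN₂ : 0 ≤ N₂ := Nat.cast_nonneg _
      have hC₁0 : (0 : ℝ) < C₁ := by linarith
      have hC₂0 : (0 : ℝ) < C₂ := by linarith
      have hC0 : (0 : ℝ) < C₁ + C₂ := by linarith
      constructor
      · -- lower bound
        have l1 : N₁ / (C₁ + C₂) ≤ N₁ / C₁ := by gcongr; linarith
        have l2 : N₂ / (C₁ + C₂) ≤ N₂ / C₂ := by gcongr; linarith
        have : (N₁ + N₂) / (C₁ + C₂) = N₁ / (C₁ + C₂) + N₂ / (C₁ + C₂) := add_div _ _ _
        rw [this]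
        linarith
      · -- upper bound
        have u1 : C₁ * N₁ ≤ (C₁ + C₂) * N₁ := by nlinarith
        have u2 : C₂ * N₂ ≤ (C₁ + C₂) * N₂ := by nlinarith
        have : (C₁ + C₂) * (N₁ + N₂) = (C₁ + C₂) * N₁ + (C₁ + C₂) * N₂ := by ring
        rw [this]
        linarith
end
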